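/- arXiv:2207.10284 — 6 statements merged into one kernel-verified Lean document; each statement's English description precedes it below -/
import Mathlib

section
/- Fix a scale s ∈ {1,2,4,…,n} and block indices x, y ∈ {1,…,n/s}. Suppose p, q ∈ [1, ∞] with 1/p + 1/q = 1, and β₁, β₂ ≥ 0 are such that for all index pairs (i₁, j₁), (i₂, j₂) in the support of B^s_{x,y} one has ‖Q_{i₁}‖_p ≤ β₁, ‖Q_{i₂}‖_p ≤ β₁, ‖K_{j₁}‖_p ≤ β₁, ‖K_{j₂}‖_p ≤ β₁, ‖Q_{i₁} − Q_{i₂}‖_q ≤ β₂, and ‖K_{j₁} − K_{j₂}‖_q ≤ β₂. Then, with r = 2β₁β₂, there exists a ∈ ℝ such that P_{i,j} ∈ [a, a + r] for all (i, j) in the support of B^s_{x,y}, and moreover 0 ≤ μ*_{s,x,y} − μ_{s,x,y} ≤ C_r · μ_{s,x,y}, where C_r = 1 + exp(r) − 2 exp(r/2). -/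
open scoped ENNReal BigOperators

/-- ℓ_p norm (p ∈ [1,∞]) of a vector in ℝ^d, via the `PiLp` norm. -/
noncomputable def lpNorm (p : ℝ≥0∞) {d : ℕ} (v : Fin d → ℝ) : ℝ :=
  ‖(WithLp.equiv p (∀ _ : Fin d, ℝ)).symm v‖

lemma lpNorm_one_eq {d : ℕ} (v : Fin d → ℝ) : lpNorm 1 v = ∑ k, |v k| := by
  simp only [lpNorm]
  rw [PiLp.norm_eq_sum (p := 1) (by norm_num)]
  simp [Real.norm_eq_abs]

lemma abs_le_lpNorm_top {d : ℕ} (v : Fin d → ℝ) (k : Fin d) : |v k| ≤ lpNorm ⊤ v := by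
  simp only [lpNorm]
  rw [PiLp.norm_eq_ciSup]
  have h : |v k| = ‖(WithLp.equiv ⊤ (∀ _ : Fin d, ℝ)).symm v k‖ := by
    simp [Real.norm_eq_abs]
  rw [h]
  exact le_ciSup (f := fun i => ‖(WithLp.equiv ⊤ (∀ _ : Fin d, ℝ)).symm v i‖)
    (Set.Finite.bddAbove (Set.finite_range _)) k

lemma lpNorm_eq_sum {d : ℕ} {p : ℝ≥0∞} (hpt : p ≠ ⊤) (hp : 1 ≤ p) (v : Fin d → ℝ) :
    lpNorm p v = (∑ k, |v k| ^ p.toReal) ^ (1 / p.toReal) := by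
  have h0 : 0 < p.toReal :=
    ENNReal.toReal_pos (fun h => by simp [h] at hp) hpt
  simp only [lpNorm]
  rw [PiLp.norm_eq_sum h0]
  simp [Real.norm_eq_abs]

lemma holder_top_one {d : ℕ} (u v : Fin d → ℝ) :
    |∑ k, u k * v k| ≤ lpNorm ⊤ u * lpNorm 1 v := by
  rw [lpNorm_one_eq]
  calc |∑ k, u k * v k| ≤ ∑ k, |u k * v k| := Finset.abs_sum_le_sum_abs _ _
    _ ≤ ∑ k, lpNorm ⊤ u * |v k| := by
        refine Finset.sum_le_sum fun k _ => ?_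
        rw [abs_mul]
        exact mul_le_mul_of_nonneg_right (abs_le_lpNorm_top u k) (abs_nonneg _)
    _ = lpNorm ⊤ u * ∑ k, |v k| := by rw [Finset.mul_sum]

lemma lp_holder {d : ℕ} (p q : ℝ≥0∞) (hp : 1 ≤ p) (hq : 1 ≤ q) (hpq : p⁻¹ + q⁻¹ = 1)
    (u v : Fin d → ℝ) : |∑ k, u k * v k| ≤ lpNorm p u * lpNorm q v := by
  by_cases hpt : p = ⊤
  · have h' : q⁻¹ = 1 := by simpa [hpt] using hpq
    have hq1 : q = 1 := ENNReal.inv_eq_one.mp h'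
    rw [hpt, hq1]
    exact holder_top_one u v
  by_cases hqt : q = ⊤
  · have h' : p⁻¹ = 1 := by simpa [hqt] using hpq
    have hp1 : p = 1 := ENNReal.inv_eq_one.mp h'
    rw [hqt, hp1, show (∑ k, u k * v k) = ∑ k, v k * u k from by simp [mul_comm], mul_comm]
    exact holder_top_one v u
  · have hp0 : p ≠ 0 := by intro h; rw [h] at hp; exact absurd hp (by simp)
    have hq0 : q ≠ 0 := by intro h; rw [h] at hq; exact absurd hq (by simp)
    have hplt : 1 < p := by
      rcases lt_or_eq_of_le hp with h | h
      · exact h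
      · exfalso
        rw [← h] at hpq
        simp only [inv_one] at hpq
        have : q⁻¹ = 0 := by
          have h2 : (1:ℝ≥0∞) + q⁻¹ = 1 + 0 := by rw [hpq, add_zero]
          exact (ENNReal.add_right_inj (by simp)).mp h2
        exact hqt (ENNReal.inv_eq_zero.mp this)
    have hpr : 1 < p.toReal := by
      have := (ENNReal.toReal_lt_toReal (by simp : (1:ℝ≥0∞) ≠ ⊤) hpt).mpr hplt
      simpa using this
    have hsum : p.toReal⁻¹ + q.toReal⁻¹ = 1 := by
      have := congrArg ENNReal.toReal hpq
      rwa [ENNReal.toReal_add (ENNReal.inv_ne_top.mpr hp0) (ENNReal.inv_ne_top.mpr hq0),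
        ENNReal.toReal_inv, ENNReal.toReal_inv, ENNReal.toReal_one] at this
    have hconj : p.toReal.HolderConjugate q.toReal := Real.holderConjugate_iff.mpr ⟨hpr, hsum⟩
    have h1 : |∑ k, u k * v k| ≤ ∑ k, |u k| * |v k| := by
      have := Finset.abs_sum_le_sum_abs (fun k => u k * v k) Finset.univ
      simpa [abs_mul] using this
    calc |∑ k, u k * v k| ≤ ∑ k, |u k| * |v k| := h1
      _ ≤ (∑ k, |u k| ^ p.toReal) ^ (1/p.toReal) * (∑ k, |v k| ^ q.toReal) ^ (1/q.toReal) :=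
          Real.inner_le_Lp_mul_Lq_of_nonneg _ hconj (fun _ _ => abs_nonneg _)
            (fun _ _ => abs_nonneg _)
      _ = lpNorm p u * lpNorm q v := by
          rw [lpNorm_eq_sum hpt hp, lpNorm_eq_sum hqt hq]

lemma exp_chord {a r t : ℝ} (hr : 0 < r) (h1 : a ≤ t) (h2 : t ≤ a + r) :
    Real.exp t ≤ Real.exp a + (t - a) / r * (Real.exp (a + r) - Real.exp a) := by
  have hl1 : (0:ℝ) ≤ (a + r - t) / r := div_nonneg (by linarith) hr.le
  have hl2 : (0:ℝ) ≤ (t - a) / r := div_nonneg (by linarith) hr.le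
  have hsum : (a + r - t) / r + (t - a) / r = 1 := by field_simp; ring
  have h := convexOn_exp.2 (Set.mem_univ a) (Set.mem_univ (a + r)) hl1 hl2 hsum
  simp only [smul_eq_mul] at h
  have harg : (a + r - t) / r * a + (t - a) / r * (a + r) = t := by field_simp; ring
  rw [harg] at h
  have hsplit : (a + r - t) / r * Real.exp a = Real.exp a - (t - a) / r * Real.exp a := by
    field_simp; ring
  rw [mul_sub]
  linarith

set_option maxHeartbeats 1000000 in
lemma key_ineq {r t : ℝ} (hr : 0 < r) (ht0 : 0 ≤ t) (ht1 : t ≤ 1) :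
    1 + t * (Real.exp r - 1) ≤ (2 + Real.exp r - 2 * Real.exp (r / 2)) * Real.exp (t * r) := by
  set A := Real.exp r with hA
  set H := Real.exp (r / 2) with hH
  set B := Real.exp (-r) with hB
  set G := Real.exp (-(r / 2)) with hG
  set X := Real.exp (t * r) with hX
  have hA1 : 1 ≤ A := Real.one_le_exp hr.le
  have hH1 : 1 ≤ H := Real.one_le_exp (by linarith)
  have hB0 : 0 < B := Real.exp_pos _
  have hG0 : 0 < G := Real.exp_pos _
  have hX0 : 0 < X := Real.exp_pos _
  have hAB : A * B = 1 := by rw [hA, hB, ← Real.exp_add]; simp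
  have hHH : H * H = A := by rw [hH, hA, ← Real.exp_add]; congr 1; ring
  have hGG : G * G = B := by rw [hG, hB, ← Real.exp_add]; congr 1; ring
  have hGH : G * H = 1 := by rw [hG, hH, ← Real.exp_add]; simp
  have hG1 : G ≤ 1 := by nlinarith
  have hXinv : Real.exp (-(t * r)) * X = 1 := by rw [hX, ← Real.exp_add]; simp
  have hchord := exp_chord (a := -r) (r := r) (t := -(t * r)) hr
    (by nlinarith) (by nlinarith)
  have harg : (-(t * r) - -r) / r = 1 - t := by field_simp; ring
  rw [harg] at hchord
  have hzero : Real.exp (-r + r) = 1 := by norm_num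
  rw [hzero] at hchord
  have hE : Real.exp (-(t * r)) ≤ 1 - t * (1 - B) := by nlinarith [hchord]
  have c1 : (1 + t * (A - 1)) * Real.exp (-(t * r)) ≤ (1 + t * (A - 1)) * (1 - t * (1 - B)) :=
    mul_le_mul_of_nonneg_left hE (by nlinarith)
  have hA2B : A * A * B = A := by rw [mul_assoc, hAB, mul_one]
  have hS : 0 ≤ A + B - 2 := by nlinarith [mul_nonneg hB0.le (sq_nonneg (A - 1)), hA2B]
  have habt2 : t ^ 2 * (A * B) = t ^ 2 := by rw [hAB, mul_one]
  have c2 : (1 + t * (A - 1)) * (1 - t * (1 - B)) ≤ 1 + (A + B - 2) / 4 := by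
    nlinarith [habt2, mul_nonneg hS (sq_nonneg (2 * t - 1))]
  have hprod2 : 0 ≤ (H - 1) * (1 - G) := mul_nonneg (by linarith) (by linarith)
  have e2 : (H - 1) * (1 - G) = H + G - 2 + (1 - G * H) := by ring
  have hHG2 : 2 ≤ H + G := by linarith [hGH]
  have hprod3 : 0 ≤ (H + G - 2) * (3 * H - G - 2) :=
    mul_nonneg (by linarith) (by linarith)
  have e3 : (H + G - 2) * (3 * H - G - 2) = 3 * (H * H) + 2 * (G * H) - G * G - 8 * H + 4 := by
    ring
  have c3 : 1 + (A + B - 2) / 4 ≤ 2 + A - 2 * H := by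
    rw [hHH, hGG, hGH] at e3
    linarith [hprod3, e3]
  have c4 : (1 + t * (A - 1)) * Real.exp (-(t * r)) ≤ 2 + A - 2 * H := le_trans c1 (le_trans c2 c3)
  calc 1 + t * (A - 1) = ((1 + t * (A - 1)) * Real.exp (-(t * r))) * X := by
        rw [mul_assoc, hXinv, mul_one]
    _ ≤ (2 + A - 2 * H) * X := mul_le_mul_of_nonneg_right c4 hX0.le

/-- The block component `B^s_{x,y}` (0-based block indices `x, y`): the (i,j) entry is 1
if `i` lies in the x-th length-s block and `j` lies in the y-th length-s block, else 0. -/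
def blockMat (n s x y : ℕ) : Matrix (Fin n) (Fin n) ℝ :=
  Matrix.of fun i j => if i.val / s = x ∧ j.val / s = y then (1 : ℝ) else 0

/-- Frobenius (entrywise) inner product of two matrices. -/
noncomputable def frobInner {n : ℕ} (M N : Matrix (Fin n) (Fin n) ℝ) : ℝ :=
  ∑ i, ∑ j, M i j * N i j

lemma card_block_row {n s z : ℕ} (hs0 : 0 < s) (hz : s * (z + 1) ≤ n) :
    (Finset.univ.filter (fun i : Fin n => i.val / s = z)).card = s := by
  have hmem : ∀ m : ℕ, m / s = z → s * z ≤ m ∧ m < s * z + s := by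
    intro m hm
    constructor
    · calc s * z = (m / s) * s := by rw [hm, mul_comm]
        _ ≤ m := Nat.div_mul_le_self m s
    · have h1 : m / s < z + 1 := by omega
      have := (Nat.div_lt_iff_lt_mul hs0).mp h1
      calc m < (z + 1) * s := this
        _ = s * z + s := by ring
  have key : (Finset.univ.filter (fun i : Fin n => i.val / s = z)).card
      = (Finset.univ : Finset (Fin s)).card := by
    apply Finset.card_bij' (i := fun (a : Fin n) (ha : a ∈ _) =>
        (⟨a.val - s * z, by
          have hq : a.val / s = z := by simpa using ha
          have := hmem a.val hq
          omega⟩ : Fin s))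
      (j := fun (b : Fin s) (hb : b ∈ _) =>
        (⟨s * z + b.val, by
          have hb' := b.isLt
          have hsz : s * (z + 1) = s * z + s := by ring
          omega⟩ : Fin n))
    case hi => intro a ha; exact Finset.mem_univ _
    case hj =>
      intro b hb
      simp only [Finset.mem_filter, Finset.mem_univ, true_and]
      show (s * z + b.val) / s = z
      rw [Nat.mul_add_div hs0, Nat.div_eq_of_lt b.isLt, add_zero]
    case left_inv =>
      intro a ha
      have hq : a.val / s = z := by simpa using ha
      have := hmem a.val hq
      apply Fin.ext
      simp only
      omega
    case right_inv =>
      intro b hb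
      apply Fin.ext
      simp only
      omega
  rw [key, Finset.card_univ, Fintype.card_fin]

set_option maxHeartbeats 1000000 in
/-- Lemma 3.1: under ℓ_p/ℓ_q bounds on the rows of `Q` and `K` over the block
`supp(B^s_{x,y})`, the entries of `P = Q Kᵀ` over the block lie in an interval
`[a, a + r]` with `r = 2 β₁ β₂`, and `0 ≤ μ* − μ ≤ C_r μ` with
`C_r = 1 + exp r − 2 exp (r/2)`. -/
theorem mu_approx_error_bound
    (n d : ℕ) (hn : ∃ k : ℕ, n = 2 ^ k)
    (Q K : Matrix (Fin n) (Fin d) ℝ)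
    (P : Matrix (Fin n) (Fin n) ℝ) (hP : P = Q * K.transpose)
    (s : ℕ) (hs : ∃ k : ℕ, s = 2 ^ k) (hsn : s ∣ n)
    (x y : ℕ) (hx : x < n / s) (hy : y < n / s)
    (p q : ℝ≥0∞) (hp : 1 ≤ p) (hq : 1 ≤ q) (hpq : p⁻¹ + q⁻¹ = 1)
    (β₁ β₂ : ℝ) (hβ₁ : 0 ≤ β₁) (hβ₂ : 0 ≤ β₂)
    (hQnorm : ∀ i : Fin n, i.val / s = x → lpNorm p (Q i) ≤ β₁)
    (hKnorm : ∀ j : Fin n, j.val / s = y → lpNorm p (K j) ≤ β₁)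
    (hQdiff : ∀ i₁ i₂ : Fin n, i₁.val / s = x → i₂.val / s = x →
      lpNorm q (Q i₁ - Q i₂) ≤ β₂)
    (hKdiff : ∀ j₁ j₂ : Fin n, j₁.val / s = y → j₂.val / s = y →
      lpNorm q (K j₁ - K j₂) ≤ β₂)
    (r : ℝ) (hr : r = 2 * β₁ * β₂)
    (μstar μ : ℝ)
    (hμstar : μstar = (1 / (s : ℝ) ^ 2) *
      frobInner (blockMat n s x y) (Matrix.of fun i j => Real.exp (P i j)))
    (hμ : μ = Real.exp ((1 / (s : ℝ) ^ 2) * frobInner (blockMat n s x y) P)) :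
    (∃ a : ℝ, ∀ i j : Fin n, i.val / s = x → j.val / s = y →
        P i j ∈ Set.Icc a (a + r)) ∧
    0 ≤ μstar - μ ∧
    μstar - μ ≤ (1 + Real.exp r - 2 * Real.exp (r / 2)) * μ := by
  have hs0 : 0 < s := by obtain ⟨k, hk⟩ := hs; rw [hk]; exact pow_pos (by norm_num) k
  have hr0 : 0 ≤ r := by rw [hr]; positivity
  have hxn : s * (x + 1) ≤ n := by
    have h1 : x + 1 ≤ n / s := hx
    calc s * (x + 1) ≤ s * (n / s) := Nat.mul_le_mul_left _ h1
      _ = n := Nat.mul_div_cancel' hsn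
  have hyn : s * (y + 1) ≤ n := by
    have h1 : y + 1 ≤ n / s := hy
    calc s * (y + 1) ≤ s * (n / s) := Nat.mul_le_mul_left _ h1
      _ = n := Nat.mul_div_cancel' hsn
  set rows : Finset (Fin n) := Finset.univ.filter (fun i : Fin n => i.val / s = x) with hrows
  set cols : Finset (Fin n) := Finset.univ.filter (fun j : Fin n => j.val / s = y) with hcols
  have hcr : rows.card = s := card_block_row hs0 hxn
  have hcc : cols.card = s := card_block_row hs0 hyn
  have hmemr : ∀ i : Fin n, i ∈ rows ↔ i.val / s = x := by intro i; simp [hrows]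
  have hmemc : ∀ j : Fin n, j ∈ cols ↔ j.val / s = y := by intro j; simp [hcols]
  set T : Finset (Fin n × Fin n) := rows ×ˢ cols with hT
  have hNcard : ((T.card : ℝ)) = (s : ℝ) ^ 2 := by
    rw [hT, Finset.card_product, hcr, hcc]; push_cast; ring
  have hN0 : (0 : ℝ) < (s : ℝ) ^ 2 := by
    have : (0:ℝ) < (s:ℝ) := by exact_mod_cast hs0
    positivity
  have hNe : ((s:ℝ)^2) ≠ 0 := ne_of_gt hN0
  have hfrob : ∀ M : Matrix (Fin n) (Fin n) ℝ,
      frobInner (blockMat n s x y) M = ∑ ij ∈ T, M ij.1 ij.2 := by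
    intro M
    rw [hT, Finset.sum_product, hrows, hcols]
    simp only [frobInner, blockMat, Matrix.of_apply, Finset.sum_filter]
    refine Finset.sum_congr rfl fun i _ => ?_
    by_cases hi : i.val / s = x <;> simp [hi, ite_mul]
  have hPentry : ∀ i j : Fin n, P i j = ∑ k, Q i k * K j k := by
    intro i j; rw [hP]; simp [Matrix.mul_apply, Matrix.transpose_apply]
  have hlpnn : ∀ (pp : ℝ≥0∞), 1 ≤ pp → ∀ (v : Fin d → ℝ), 0 ≤ lpNorm pp v := by
    intro pp hpp v
    haveI : Fact (1 ≤ pp) := ⟨hpp⟩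
    exact norm_nonneg ((WithLp.equiv pp (∀ _ : Fin d, ℝ)).symm v)
  have hdiffbd : ∀ i₁ j₁ i₂ j₂ : Fin n, i₁.val / s = x → j₁.val / s = y →
      i₂.val / s = x → j₂.val / s = y → P i₁ j₁ - P i₂ j₂ ≤ r := by
    intro i₁ j₁ i₂ j₂ h1 h2 h3 h4
    have e : P i₁ j₁ - P i₂ j₂
        = (∑ k, Q i₁ k * (K j₁ - K j₂) k) + (∑ k, (Q i₁ - Q i₂) k * K j₂ k) := by
      simp only [hPentry, Pi.sub_apply, mul_sub, sub_mul, Finset.sum_sub_distrib]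
      ring
    have b1 : (∑ k, Q i₁ k * (K j₁ - K j₂) k) ≤ β₁ * β₂ := by
      refine le_trans (le_abs_self _) (le_trans (lp_holder p q hp hq hpq _ _) ?_)
      exact mul_le_mul (hQnorm _ h1) (hKdiff _ _ h2 h4) (hlpnn q hq _) hβ₁
    have b2 : (∑ k, (Q i₁ - Q i₂) k * K j₂ k) ≤ β₂ * β₁ := by
      refine le_trans (le_abs_self _)
        (le_trans (lp_holder q p hq hp (by rw [add_comm]; exact hpq) _ _) ?_)
      exact mul_le_mul (hQdiff _ _ h1 h3) (hKnorm _ h4) (hlpnn p hp _) hβ₂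
    rw [e, hr]; linarith
  have hixlt : s * x < n := by
    have hsz : s * (x + 1) = s * x + s := by ring
    omega
  have hjylt : s * y < n := by
    have hsz : s * (y + 1) = s * y + s := by ring
    omega
  have hi₀mem : (⟨s * x, hixlt⟩ : Fin n) ∈ rows := by
    rw [hmemr]; exact Nat.mul_div_cancel_left x hs0
  have hj₀mem : (⟨s * y, hjylt⟩ : Fin n) ∈ cols := by
    rw [hmemc]; exact Nat.mul_div_cancel_left y hs0
  have hTne : T.Nonempty :=
    ⟨(⟨s * x, hixlt⟩, ⟨s * y, hjylt⟩), by rw [hT, Finset.mem_product]; exact ⟨hi₀mem, hj₀mem⟩⟩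
  set V := T.image (fun ij : Fin n × Fin n => P ij.1 ij.2) with hV
  have hVne : V.Nonempty := hTne.image _
  set a := V.min' hVne with ha
  have hmemT : ∀ ij : Fin n × Fin n, ij ∈ T → ij.1.val / s = x ∧ ij.2.val / s = y := by
    intro ij hij
    rw [hT, Finset.mem_product] at hij
    exact ⟨(hmemr _).mp hij.1, (hmemc _).mp hij.2⟩
  have ha_le : ∀ ij ∈ T, a ≤ P ij.1 ij.2 := fun ij hij =>
    Finset.min'_le _ _ (Finset.mem_image_of_mem _ hij)
  obtain ⟨ij₀, hij₀T, hij₀⟩ := Finset.mem_image.mp (Finset.min'_mem V hVne)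
  have hub : ∀ ij ∈ T, P ij.1 ij.2 ≤ a + r := by
    intro ij hij
    have h1 := hmemT ij hij
    have h2 := hmemT ij₀ hij₀T
    have hd := hdiffbd ij.1 ij.2 ij₀.1 ij₀.2 h1.1 h1.2 h2.1 h2.2
    have e0 : P ij₀.1 ij₀.2 = a := hij₀
    linarith
  have part_a : ∀ i j : Fin n, i.val / s = x → j.val / s = y → P i j ∈ Set.Icc a (a + r) := by
    intro i j hi hj
    have hmem : (i, j) ∈ T := by
      rw [hT, Finset.mem_product]
      exact ⟨(hmemr i).mpr hi, (hmemc j).mpr hj⟩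
    exact ⟨ha_le _ hmem, hub _ hmem⟩
  set SP := ∑ ij ∈ T, P ij.1 ij.2 with hSP
  set SE := ∑ ij ∈ T, Real.exp (P ij.1 ij.2) with hSE
  have hμstar' : μstar = (1 / (s:ℝ)^2) * SE := by
    rw [hμstar, hfrob, hSE]
    simp only [Matrix.of_apply]
  have hμ' : μ = Real.exp ((1 / (s:ℝ)^2) * SP) := by rw [hμ, hfrob, hSP]
  have hwsum : ∑ _ij ∈ T, (1 / (s:ℝ)^2) = 1 := by
    rw [Finset.sum_const, nsmul_eq_mul, hNcard]
    field_simp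
  have hjensen : μ ≤ μstar := by
    rw [hμ', hμstar']
    have h := convexOn_exp.map_sum_le (t := T) (w := fun _ => 1/(s:ℝ)^2)
      (p := fun ij => P ij.1 ij.2) (fun _ _ => by positivity) hwsum (fun _ _ => Set.mem_univ _)
    simp only [smul_eq_mul] at h
    rw [← Finset.mul_sum, ← Finset.mul_sum] at h
    rw [hSP, hSE]
    exact h
  have hSP_lb : (s:ℝ)^2 * a ≤ SP := by
    have h1 : ∑ _ij ∈ T, a ≤ SP := by rw [hSP]; exact Finset.sum_le_sum ha_le
    calc (s:ℝ)^2 * a = ∑ _ij ∈ T, a := by rw [Finset.sum_const, nsmul_eq_mul, hNcard]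
      _ ≤ SP := h1
  have hSP_ub : SP ≤ (s:ℝ)^2 * (a + r) := by
    have h1 : SP ≤ ∑ _ij ∈ T, (a + r) := by rw [hSP]; exact Finset.sum_le_sum hub
    calc SP ≤ ∑ _ij ∈ T, (a + r) := h1
      _ = (s:ℝ)^2 * (a + r) := by rw [Finset.sum_const, nsmul_eq_mul, hNcard]
  set m := (1/(s:ℝ)^2) * SP with hm
  have hcancel : ∀ z : ℝ, (1/(s:ℝ)^2) * ((s:ℝ)^2 * z) = z := by
    intro z; rw [one_div, inv_mul_cancel_left₀ hNe]
  have hm_lb : a ≤ m := by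
    calc a = (1/(s:ℝ)^2) * ((s:ℝ)^2 * a) := (hcancel a).symm
      _ ≤ (1/(s:ℝ)^2) * SP := by
          apply mul_le_mul_of_nonneg_left hSP_lb
          positivity
      _ = m := hm.symm
  have hm_ub : m ≤ a + r := by
    calc m = (1/(s:ℝ)^2) * SP := hm
      _ ≤ (1/(s:ℝ)^2) * ((s:ℝ)^2 * (a + r)) := by
          apply mul_le_mul_of_nonneg_left hSP_ub
          positivity
      _ = a + r := hcancel _
  rcases eq_or_lt_of_le hr0 with hre | hrpos
  · -- r = 0
    have hPa : ∀ ij ∈ T, P ij.1 ij.2 = a := fun ij hij =>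
      le_antisymm (by have := hub ij hij; linarith) (ha_le ij hij)
    have hSEa : SE = (s:ℝ)^2 * Real.exp a := by
      rw [hSE]
      calc ∑ ij ∈ T, Real.exp (P ij.1 ij.2) = ∑ _ij ∈ T, Real.exp a :=
            Finset.sum_congr rfl (fun ij hij => by rw [hPa ij hij])
        _ = (s:ℝ)^2 * Real.exp a := by rw [Finset.sum_const, nsmul_eq_mul, hNcard]
    have hSPa : SP = (s:ℝ)^2 * a := by
      rw [hSP]
      calc ∑ ij ∈ T, P ij.1 ij.2 = ∑ _ij ∈ T, a :=
            Finset.sum_congr rfl (fun ij hij => by rw [hPa ij hij])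
        _ = (s:ℝ)^2 * a := by rw [Finset.sum_const, nsmul_eq_mul, hNcard]
    have hμs : μstar = Real.exp a := by rw [hμstar', hSEa, hcancel]
    have hμe : μ = Real.exp a := by rw [hμ', hm, hSPa, hcancel]
    refine ⟨⟨a, part_a⟩, by linarith, ?_⟩
    rw [hμs, hμe, ← hre]
    norm_num
  · -- r > 0
    set t := (m - a)/r with htdef
    have ht0 : 0 ≤ t := div_nonneg (by linarith) hrpos.le
    have ht1 : t ≤ 1 := (div_le_one hrpos).mpr (by linarith)
    have htr : t * r = m - a := div_mul_cancel₀ _ (ne_of_gt hrpos)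
    have hμeq : μ = Real.exp a * Real.exp (t * r) := by
      rw [hμ', ← Real.exp_add]
      congr 1
      linarith [htr]
    have hSPm : (s:ℝ)^2 * m = SP := by
      rw [hm, one_div, mul_inv_cancel_left₀ hNe]
    have hchordsum : SE ≤ (s:ℝ)^2 * Real.exp a
        + ((s:ℝ)^2 * t) * (Real.exp (a+r) - Real.exp a) := by
      have hstep : SE ≤ ∑ ij ∈ T,
          (Real.exp a + (P ij.1 ij.2 - a)/r * (Real.exp (a+r) - Real.exp a)) := by
        rw [hSE]
        exact Finset.sum_le_sum fun ij hij => exp_chord hrpos (ha_le ij hij) (hub ij hij)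
      have hsum2 : ∑ ij ∈ T,
          (Real.exp a + (P ij.1 ij.2 - a)/r * (Real.exp (a+r) - Real.exp a))
          = (s:ℝ)^2 * Real.exp a + ((SP - (s:ℝ)^2*a)/r) * (Real.exp (a+r) - Real.exp a) := by
        rw [Finset.sum_add_distrib, Finset.sum_const, nsmul_eq_mul, hNcard, ← Finset.sum_mul,
          ← Finset.sum_div, Finset.sum_sub_distrib, Finset.sum_const, nsmul_eq_mul, hNcard,
          ← hSP]
      have hSPt : (SP - (s:ℝ)^2*a)/r = (s:ℝ)^2 * t := by
        rw [← hSPm, htdef]; ring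
      rw [hsum2, hSPt] at hstep
      exact hstep
    have hμstar_le : μstar ≤ Real.exp a + t * (Real.exp (a+r) - Real.exp a) := by
      rw [hμstar']
      calc (1/(s:ℝ)^2) * SE
          ≤ (1/(s:ℝ)^2) * ((s:ℝ)^2 * Real.exp a
            + ((s:ℝ)^2 * t) * (Real.exp (a+r) - Real.exp a)) := by
            apply mul_le_mul_of_nonneg_left hchordsum
            positivity
        _ = Real.exp a + t * (Real.exp (a+r) - Real.exp a) := by
            field_simp
    have hkey := key_ineq hrpos ht0 ht1
    have hfin : Real.exp a * (1 + t * (Real.exp r - 1))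
        ≤ Real.exp a * ((2 + Real.exp r - 2*Real.exp (r/2)) * Real.exp (t*r)) :=
      mul_le_mul_of_nonneg_left hkey (Real.exp_pos a).le
    have hexpand : Real.exp a + t * (Real.exp (a+r) - Real.exp a)
        = Real.exp a * (1 + t * (Real.exp r - 1)) := by
      rw [Real.exp_add]; ring
    have hRHS : Real.exp a * ((2 + Real.exp r - 2*Real.exp (r/2)) * Real.exp (t*r))
        = (1 + Real.exp r - 2*Real.exp (r/2)) * μ + μ := by
      rw [hμeq]; ring
    exact ⟨⟨a, part_a⟩, by linarith, by linarith⟩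
end

section
/- Let f : ℝ → ℝ be convex, let a ≤ b be real numbers, and let x₁, …, x_k ∈ [a, b] with k ≥ 1. Then (1/k) ∑_{i=1}^k f(x_i) − f((1/k) ∑_{i=1}^k x_i) ≤ f(a) + f(b) − 2 f((a + b)/2). -/
open scoped BigOperators

/-- Key lemma: for convex `f` and `m ∈ [a,b]` with `a < b`, the gap between the
chord and `f` at `m` is at most twice the midpoint gap. -/
lemma jensen_gap_key
    (f : ℝ → ℝ) (hf : ConvexOn ℝ Set.univ f)
    (a b m : ℝ) (hab : a < b) (h1 : a ≤ m) (h2 : m ≤ b) :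
    f a + (m - a) * (f b - f a) / (b - a) - f m ≤
      f a + f b - 2 * f ((a + b) / 2) := by
  have hs : (0:ℝ) < b - a := by linarith
  have hmid : f ((a + b) / 2) ≤ (f a + f b) / 2 := by
    have h := hf.2 (Set.mem_univ a) (Set.mem_univ b)
      (by norm_num : (0:ℝ) ≤ 1/2) (by norm_num : (0:ℝ) ≤ 1/2) (by norm_num)
    simp only [smul_eq_mul] at h
    have : (1/2 : ℝ) * a + (1/2 : ℝ) * b = (a + b) / 2 := by ring
    rw [this] at h
    linarith
  have goal' : (m - a) * (f b - f a) ≤ (f b - 2 * f ((a+b)/2) + f m) * (b - a) := by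
    rcases le_total m ((a + b) / 2) with h | h
    · -- m in left half; express midpoint as combination of m and b
      have hbm : (0:ℝ) < b - m := by linarith
      set t : ℝ := ((b - a) / 2) / (b - m) with htdef
      have ht0 : 0 ≤ t := by positivity
      have ht1 : t ≤ 1 := by
        rw [htdef, div_le_one hbm]; linarith
      have hconv := hf.2 (Set.mem_univ m) (Set.mem_univ b) ht0
        (by linarith : (0:ℝ) ≤ 1 - t) (by ring)
      simp only [smul_eq_mul] at hconv
      have hne : b - m ≠ 0 := hbm.ne'
      have heq : t * m + (1 - t) * b = (a + b) / 2 := by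
        rw [htdef]
        field_simp [hne]
        ring
      rw [heq] at hconv
      have ht' : t * (b - m) = (b - a) / 2 := by
        rw [htdef, div_mul_cancel₀ _ hne]
      have h3 : (b - m) * f ((a+b)/2) ≤ ((b-a)/2) * f m + ((b-m) - (b-a)/2) * f b := by
        have h4 := mul_le_mul_of_nonneg_left hconv hbm.le
        have h5 : (b - m) * (t * f m + (1 - t) * f b)
            = ((b-a)/2) * f m + ((b-m) - (b-a)/2) * f b := by
          linear_combination (f m - f b) * ht'
        linarith [h4, h5.le, h5.ge]
      nlinarith [h3, hmid, mul_le_mul_of_nonneg_right hmid (by linarith : (0:ℝ) ≤ m - a)]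
    · -- m in right half; express midpoint as combination of m and a
      have ham : (0:ℝ) < m - a := by linarith
      set t : ℝ := ((b - a) / 2) / (m - a) with htdef
      have ht0 : 0 ≤ t := by positivity
      have ht1 : t ≤ 1 := by
        rw [htdef, div_le_one ham]; linarith
      have hconv := hf.2 (Set.mem_univ m) (Set.mem_univ a) ht0
        (by linarith : (0:ℝ) ≤ 1 - t) (by ring)
      simp only [smul_eq_mul] at hconv
      have hne : m - a ≠ 0 := ham.ne'
      have heq : t * m + (1 - t) * a = (a + b) / 2 := by
        rw [htdef]
        field_simp [hne]
        ring
      rw [heq] at hconv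
      have ht' : t * (m - a) = (b - a) / 2 := by
        rw [htdef, div_mul_cancel₀ _ hne]
      have h3 : (m - a) * f ((a+b)/2) ≤ ((b-a)/2) * f m + ((m-a) - (b-a)/2) * f a := by
        have h4 := mul_le_mul_of_nonneg_left hconv ham.le
        have h5 : (m - a) * (t * f m + (1 - t) * f a)
            = ((b-a)/2) * f m + ((m-a) - (b-a)/2) * f a := by
          linear_combination (f m - f a) * ht'
        linarith [h4, h5.le, h5.ge]
      nlinarith [h3, hmid, mul_le_mul_of_nonneg_right hmid (by linarith : (0:ℝ) ≤ b - m)]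
  have hdiv : (m - a) * (f b - f a) / (b - a) ≤ f b - 2 * f ((a+b)/2) + f m := by
    rw [div_le_iff₀ hs]
    exact goal'
  linarith

/-- Jensen-gap bound: for a convex function `f` and points `x₁, …, x_k ∈ [a, b]`,
`(1/k) ∑ f(xᵢ) − f((1/k) ∑ xᵢ) ≤ f(a) + f(b) − 2 f((a+b)/2)`. -/
theorem jensen_gap_bound
    (f : ℝ → ℝ) (hf : ConvexOn ℝ Set.univ f)
    (a b : ℝ) (hab : a ≤ b)
    (k : ℕ) (hk : 0 < k) (x : Fin k → ℝ)
    (hx : ∀ i, x i ∈ Set.Icc a b) :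
    (1 / (k : ℝ)) * ∑ i, f (x i) - f ((1 / (k : ℝ)) * ∑ i, x i) ≤
      f a + f b - 2 * f ((a + b) / 2) := by
  have hk0 : (0:ℝ) < (k:ℝ) := by exact_mod_cast hk
  have hkne : (k:ℝ) ≠ 0 := ne_of_gt hk0
  rcases eq_or_lt_of_le hab with rfl | hab'
  · -- a = b case: all x i = a
    have hxa : ∀ i, x i = a := fun i => le_antisymm (hx i).2 (hx i).1
    have hsx : ∑ i, x i = (k:ℝ) * a := by
      simp [hxa, Finset.sum_const, Finset.card_fin, mul_comm]
    have hsf : ∑ i, f (x i) = (k:ℝ) * f a := by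
      simp [hxa, Finset.sum_const, Finset.card_fin, mul_comm]
    rw [hsx, hsf]
    have h1 : (1 / (k:ℝ)) * ((k:ℝ) * f a) = f a := by field_simp
    have h2 : (1 / (k:ℝ)) * ((k:ℝ) * a) = a := by field_simp
    rw [h1, h2]
    have : (a + a) / 2 = a := by ring
    rw [this]
    linarith
  · set S : ℝ := ∑ i, x i with hS
    set m : ℝ := (1 / (k : ℝ)) * S with hm
    have hsl : (k:ℝ) * a ≤ S := by
      calc (k:ℝ) * a = ∑ _i : Fin k, a := by
            simp [Finset.sum_const, Finset.card_fin, mul_comm]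
        _ ≤ S := Finset.sum_le_sum fun i _ => (hx i).1
    have hsu : S ≤ (k:ℝ) * b := by
      calc S ≤ ∑ _i : Fin k, b := Finset.sum_le_sum fun i _ => (hx i).2
        _ = (k:ℝ) * b := by simp [Finset.sum_const, Finset.card_fin, mul_comm]
    have hma : a ≤ m := by
      rw [hm, one_div, inv_mul_eq_div, le_div_iff₀ hk0]
      linarith
    have hmb : m ≤ b := by
      rw [hm, one_div, inv_mul_eq_div, div_le_iff₀ hk0]
      linarith
    -- chord bound for each point
    have hchord : ∀ i, f (x i) ≤ f a + (x i - a) * (f b - f a) / (b - a) := by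
      intro i
      have hs : (0:ℝ) < b - a := by linarith
      have hne : b - a ≠ 0 := hs.ne'
      set t : ℝ := (b - x i) / (b - a) with htdef
      have ht0 : 0 ≤ t := by
        apply div_nonneg _ hs.le
        linarith [(hx i).2]
      have ht1 : 1 - t = (x i - a) / (b - a) := by
        rw [htdef]
        field_simp [hne]
        ring
      have ht1' : 0 ≤ 1 - t := by
        rw [ht1]
        apply div_nonneg _ hs.le
        linarith [(hx i).1]
      have hconv := hf.2 (Set.mem_univ a) (Set.mem_univ b) ht0 ht1' (by ring)
      simp only [smul_eq_mul] at hconv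
      have heq : t * a + (1 - t) * b = x i := by
        rw [htdef]
        field_simp [hne]
        ring
      rw [heq] at hconv
      calc f (x i) ≤ t * f a + (1 - t) * f b := hconv
        _ = f a + (x i - a) * (f b - f a) / (b - a) := by
            rw [htdef]
            field_simp [hne]
            ring
    have hsum : ∑ i, f (x i) ≤ (k:ℝ) * f a + (S - (k:ℝ) * a) * (f b - f a) / (b - a) := by
      calc ∑ i, f (x i) ≤ ∑ i, (f a + (x i - a) * (f b - f a) / (b - a)) :=
            Finset.sum_le_sum fun i _ => hchord i
        _ = (k:ℝ) * f a + (S - (k:ℝ) * a) * (f b - f a) / (b - a) := by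
            have hterm : ∑ i, ((x i - a) * (f b - f a) / (b - a))
                = (S - (k:ℝ) * a) * (f b - f a) / (b - a) := by
              rw [← Finset.sum_div, ← Finset.sum_mul, Finset.sum_sub_distrib]
              simp [hS, Finset.sum_const, Finset.card_fin, mul_comm]
            rw [Finset.sum_add_distrib, hterm]
            simp [Finset.sum_const, Finset.card_fin, nsmul_eq_mul]
    have hA : (1 / (k:ℝ)) * ∑ i, f (x i) ≤ f a + (m - a) * (f b - f a) / (b - a) := by
      have h1 := mul_le_mul_of_nonneg_left hsum (by positivity : (0:ℝ) ≤ 1 / (k:ℝ))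
      have h2 : (1 / (k:ℝ)) * ((k:ℝ) * f a + (S - (k:ℝ) * a) * (f b - f a) / (b - a)) =
          f a + (m - a) * (f b - f a) / (b - a) := by
        have hne : b - a ≠ 0 := by
          have : (0:ℝ) < b - a := by linarith
          exact this.ne'
        rw [hm]
        field_simp [hkne, hne]
      linarith [h1, h2.le, h2.ge]
    have hkey := jensen_gap_key f hf a b m hab' hma hmb
    have : f ((1 / (k:ℝ)) * S) = f m := by rw [hm]
    rw [this]
    linarith
end

section
/- Let r ≥ 0, a ∈ ℝ, and let x₁, …, x_k ∈ [a, a + r] with k ≥ 1. Set m = (1/k) ∑_{i=1}^k x_i. Then 0 ≤ (1/k) ∑_{i=1}^k exp(x_i) − exp(m) ≤ C_r · exp(m), where C_r = 1 + exp(r) − 2 exp(r/2). -/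
open scoped BigOperators

/-- Cubic upper bound for `exp` on `[0,1]`. -/
lemma exp_le_cubic {r : ℝ} (h0 : 0 ≤ r) (h1 : r ≤ 1) :
    Real.exp r ≤ 1 + r + r ^ 2 / 2 + r ^ 3 / 2 := by
  have h := Real.exp_bound' h0 h1 (n := 3) (by norm_num)
  have he : (∑ m ∈ Finset.range 3, r ^ m / (m.factorial : ℝ)) = 1 + r + r ^ 2 / 2 := by
    norm_num [Finset.sum_range_succ, Nat.factorial]
  rw [he] at h
  norm_num [Nat.factorial] at h
  nlinarith [pow_nonneg h0 3]

/-- Quadratic lower bound for `exp (r/2)`. -/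
lemma exp_half_ge {r : ℝ} (h0 : 0 ≤ r) :
    1 + r / 2 + r ^ 2 / 16 ≤ Real.exp (r / 2) := by
  have h1 : 1 + r / 4 ≤ Real.exp (r / 4) := by
    have := Real.add_one_le_exp (r / 4); linarith
  have h2 : Real.exp (r / 4) * Real.exp (r / 4) = Real.exp (r / 2) := by
    rw [← Real.exp_add]; ring_nf
  nlinarith [Real.exp_pos (r / 4)]

/-- Key scalar inequality. -/
lemma key_scalar {r : ℝ} (hr : 0 < r) :
    Real.exp r - 1 ≤
      r * (1 + Real.sqrt 2 * (Real.exp (r / 2) - 1) + (Real.exp (r / 2) - 1) ^ 2) := by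
  set E := Real.exp (r / 2) with hE
  have hE1 : 1 ≤ E := Real.one_le_exp (by positivity)
  have hEsq : E * E = Real.exp r := by rw [hE, ← Real.exp_add]; ring_nf
  have hs2 : Real.sqrt 2 ^ 2 = 2 := Real.sq_sqrt (by norm_num)
  have hs2' : (1.414 : ℝ) ≤ Real.sqrt 2 := by
    nlinarith [Real.sqrt_nonneg 2]
  rcases le_or_gt r 1 with hr1 | hr1
  · -- small r : use polynomial bounds
    have hc := exp_le_cubic hr.le hr1
    have hq : r / 2 + r ^ 2 / 16 ≤ E - 1 := by
      have := exp_half_ge hr.le; rw [hE]; linarith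
    have hA : r * (1 + Real.sqrt 2 * (r / 2 + r ^ 2 / 16) + (r / 2) ^ 2) ≤
        r * (1 + Real.sqrt 2 * (E - 1) + (E - 1) ^ 2) := by
      apply mul_le_mul_of_nonneg_left _ hr.le
      have h1 : Real.sqrt 2 * (r / 2 + r ^ 2 / 16) ≤ Real.sqrt 2 * (E - 1) :=
        mul_le_mul_of_nonneg_left hq (Real.sqrt_nonneg 2)
      have h2 : (r / 2) ^ 2 ≤ (E - 1) ^ 2 := by nlinarith
      linarith
    have hB : Real.exp r - 1 ≤ r * (1 + Real.sqrt 2 * (r / 2 + r ^ 2 / 16) + (r / 2) ^ 2) := by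
      nlinarith [mul_nonneg (mul_nonneg hr.le hr.le) (sub_nonneg.2 hr1),
        mul_nonneg (mul_nonneg (mul_nonneg hr.le hr.le) (sub_nonneg.2 hr1)) (by linarith : (0:ℝ) ≤ Real.sqrt 2)]
    linarith
  · rcases le_or_gt r 2 with hr2 | hr2
    · -- 1 < r ≤ 2
      have hinv : (1 - r / 2) * E ≤ 1 := by
        have h := Real.add_one_le_exp (-(r / 2))
        have hEinv : Real.exp (-(r / 2)) * E = 1 := by
          rw [hE, ← Real.exp_add]; simp
        nlinarith [Real.exp_pos (-(r / 2)), hE1]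
      -- (2 - r) * (E - 1) ≤ r
      have h1 : (2 - r) * (E - 1) ≤ r := by nlinarith
      nlinarith [mul_nonneg (sub_nonneg.2 hr1.le) (sub_nonneg.2 hE1),
        mul_nonneg (mul_nonneg (sub_nonneg.2 hr1.le) (sub_nonneg.2 hE1)) (sub_nonneg.2 hE1),
        mul_nonneg (sub_nonneg.2 hr1.le) (sub_nonneg.2 hs2')]
    · -- r > 2
      have h1 : 0 ≤ E - 1 := by linarith
      nlinarith [mul_nonneg (sub_nonneg.2 hr2.le) (mul_nonneg h1 h1),
        mul_nonneg (sub_nonneg.2 hr2.le) h1,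
        mul_nonneg (mul_nonneg (sub_nonneg.2 hr2.le) h1) (by linarith : (0:ℝ) ≤ Real.sqrt 2),
        mul_nonneg h1 (by linarith : (0:ℝ) ≤ Real.sqrt 2 - 1)]

/-- The chord-vs-exponential comparison. -/
lemma chord_le {r s : ℝ} (hr : 0 < r) (hs0 : 0 ≤ s) (hsr : s ≤ r) :
    1 + (Real.exp r - 1) * s / r ≤ (2 + Real.exp r - 2 * Real.exp (r / 2)) * Real.exp s := by
  obtain ⟨u, hu⟩ : ∃ u : ℝ, u = Real.exp (r / 2) - 1 := ⟨_, rfl⟩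
  have hu0 : 0 ≤ u := by
    have h : (1 : ℝ) ≤ Real.exp (r / 2) := Real.one_le_exp (by positivity)
    rw [hu]; linarith
  have hEsq : Real.exp (r / 2) * Real.exp (r / 2) = Real.exp r := by
    rw [← Real.exp_add]; ring_nf
  have hc : 2 + Real.exp r - 2 * Real.exp (r / 2) = 1 + u ^ 2 := by
    rw [hu, ← hEsq]; ring
  rw [hc]
  have hs2 : Real.sqrt 2 ^ 2 = 2 := Real.sq_sqrt (by norm_num)
  have hs2n : 0 ≤ Real.sqrt 2 := Real.sqrt_nonneg 2
  have hkey := key_scalar hr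
  rw [← hu] at hkey
  -- (exp r - 1) * s / r ≤ (1 + u^2 + sqrt 2 * u) * s
  have hlam : (Real.exp r - 1) * s / r ≤ (1 + u ^ 2 + Real.sqrt 2 * u) * s := by
    rw [div_le_iff₀ hr]
    nlinarith [mul_le_mul_of_nonneg_right hkey hs0]
  have hquad : 1 + s + s ^ 2 / 2 ≤ Real.exp s := Real.quadratic_le_exp_of_nonneg hs0
  have hsq : 0 ≤ 2 * u ^ 2 - 2 * Real.sqrt 2 * u * s + s ^ 2 := by
    nlinarith [sq_nonneg (Real.sqrt 2 * u - s)]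
  have hmid : 1 + (1 + u ^ 2 + Real.sqrt 2 * u) * s ≤ (1 + u ^ 2) * (1 + s + s ^ 2 / 2) := by
    nlinarith [hsq, mul_nonneg (sq_nonneg u) (sq_nonneg s)]
  have hpos : (0 : ℝ) ≤ 1 + u ^ 2 := by positivity
  calc 1 + (Real.exp r - 1) * s / r ≤ 1 + (1 + u ^ 2 + Real.sqrt 2 * u) * s := by linarith
    _ ≤ (1 + u ^ 2) * (1 + s + s ^ 2 / 2) := hmid
    _ ≤ (1 + u ^ 2) * Real.exp s := by nlinarith

/-- For `x₁, …, x_k ∈ [a, a + r]` with mean `m`,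
`0 ≤ (1/k) ∑ exp(xᵢ) − exp(m) ≤ C_r exp(m)` where `C_r = 1 + exp(r) − 2 exp(r/2)`. -/
theorem exp_jensen_gap
    (r : ℝ) (hr : 0 ≤ r) (a : ℝ)
    (k : ℕ) (hk : 0 < k) (x : Fin k → ℝ)
    (hx : ∀ i, x i ∈ Set.Icc a (a + r))
    (m : ℝ) (hm : m = (1 / (k : ℝ)) * ∑ i, x i) :
    0 ≤ (1 / (k : ℝ)) * ∑ i, Real.exp (x i) - Real.exp m ∧
    (1 / (k : ℝ)) * ∑ i, Real.exp (x i) - Real.exp m ≤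
      (1 + Real.exp r - 2 * Real.exp (r / 2)) * Real.exp m := by
  have hk0 : (0 : ℝ) < (k : ℝ) := by exact_mod_cast hk
  have hw : ∑ _i : Fin k, (1 / (k : ℝ)) = 1 := by
    simp [Finset.sum_const, Finset.card_univ]
    field_simp
  -- Jensen lower bound
  have hjensen : Real.exp m ≤ (1 / (k : ℝ)) * ∑ i, Real.exp (x i) := by
    have h := convexOn_exp.map_sum_le (t := Finset.univ) (w := fun _ : Fin k => 1 / (k : ℝ))
      (p := x) (fun i _ => by positivity) hw (fun i _ => Set.mem_univ _)
    have h1 : (∑ i, (1 / (k : ℝ)) • x i) = m := by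
      rw [hm, Finset.mul_sum]; simp [smul_eq_mul]
    rw [h1] at h
    calc Real.exp m ≤ ∑ i, (1 / (k : ℝ)) * Real.exp (x i) := h
      _ = (1 / (k : ℝ)) * ∑ i, Real.exp (x i) := by rw [Finset.mul_sum]
  refine ⟨by linarith, ?_⟩
  -- mean lies in [a, a+r]
  have hma : a ≤ m := by
    rw [hm]
    have : (k : ℝ) * a ≤ ∑ i, x i := by
      calc (k : ℝ) * a = ∑ _i : Fin k, a := by
            simp [Finset.sum_const, Finset.card_univ]
            try ring
        _ ≤ ∑ i, x i := Finset.sum_le_sum fun i _ => (hx i).1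
    rw [div_mul_eq_mul_div, one_mul, le_div_iff₀ hk0]
    linarith
  have hmar : m ≤ a + r := by
    rw [hm]
    have : ∑ i, x i ≤ (k : ℝ) * (a + r) := by
      calc ∑ i, x i ≤ ∑ _i : Fin k, (a + r) := Finset.sum_le_sum fun i _ => (hx i).2
        _ = (k : ℝ) * (a + r) := by
            simp [Finset.sum_const, Finset.card_univ]
            try ring
    rw [div_mul_eq_mul_div, one_mul, div_le_iff₀ hk0]
    linarith
  rcases eq_or_lt_of_le hr with hr0 | hr0
  · -- r = 0 : all points equal a
    have hxa : ∀ i, x i = a := fun i => le_antisymm (by have := (hx i).2; rw [← hr0] at this; simpa using this) (hx i).1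
    have hma' : m = a := by
      rw [hm]; simp [hxa, Finset.sum_const, Finset.card_univ]; field_simp
    have hsum : (∑ i, Real.exp (x i)) = (k : ℝ) * Real.exp a := by
      simp [hxa, Finset.sum_const, Finset.card_univ, mul_comm]
    rw [hsum, hma', ← hr0]
    have : (1 / (k : ℝ)) * ((k : ℝ) * Real.exp a) = Real.exp a := by field_simp
    rw [this]
    norm_num
  · -- r > 0
    -- chord bound for each i
    have hchord : ∀ i, Real.exp (x i) ≤
        Real.exp a + (Real.exp (a + r) - Real.exp a) * (x i - a) / r := by
      intro i
      obtain ⟨h1, h2⟩ := hx i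
      have hθ : x i = ((a + r - x i) / r) • a + ((x i - a) / r) • (a + r) := by
        rw [smul_eq_mul, smul_eq_mul, div_mul_eq_mul_div, div_mul_eq_mul_div, ← add_div,
          eq_div_iff hr0.ne']
        ring
      have hw1 : (0:ℝ) ≤ (a + r - x i) / r := div_nonneg (by linarith) hr0.le
      have hw2 : (0:ℝ) ≤ (x i - a) / r := div_nonneg (by linarith) hr0.le
      have hw3 : (a + r - x i) / r + (x i - a) / r = 1 := by
        rw [← add_div, div_eq_one_iff_eq hr0.ne']
        ring
      have hcv := convexOn_exp.2 (Set.mem_univ a) (Set.mem_univ (a + r)) hw1 hw2 hw3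
      rw [← hθ] at hcv
      have : (a + r - x i) / r * Real.exp a + (x i - a) / r * Real.exp (a + r)
          = Real.exp a + (Real.exp (a + r) - Real.exp a) * (x i - a) / r := by
        field_simp; ring
      calc Real.exp (x i) ≤ (a + r - x i) / r * Real.exp a + (x i - a) / r * Real.exp (a + r) := by
            simpa [smul_eq_mul] using hcv
        _ = _ := this
    have hsum : (1 / (k : ℝ)) * ∑ i, Real.exp (x i) ≤
        Real.exp a + (Real.exp (a + r) - Real.exp a) * (m - a) / r := by
      have h1 : ∑ i, Real.exp (x i) ≤
          ∑ i, (Real.exp a + (Real.exp (a + r) - Real.exp a) * (x i - a) / r) :=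
        Finset.sum_le_sum fun i _ => hchord i
      have h2 : ∑ i, (Real.exp a + (Real.exp (a + r) - Real.exp a) * (x i - a) / r)
          = (k : ℝ) * Real.exp a + (Real.exp (a + r) - Real.exp a) * ((∑ i, x i) - (k : ℝ) * a) / r := by
        rw [Finset.sum_add_distrib]
        simp only [Finset.sum_const, Finset.card_univ, Fintype.card_fin, nsmul_eq_mul]
        rw [← Finset.sum_div, ← Finset.mul_sum]
        congr 1
        rw [Finset.sum_sub_distrib]
        simp [Finset.sum_const, Finset.card_univ, mul_comm]
      have h3 : (1 / (k : ℝ)) * ((k : ℝ) * Real.exp a + (Real.exp (a + r) - Real.exp a) * ((∑ i, x i) - (k : ℝ) * a) / r)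
          = Real.exp a + (Real.exp (a + r) - Real.exp a) * (m - a) / r := by
        rw [hm]; field_simp
      calc (1 / (k : ℝ)) * ∑ i, Real.exp (x i)
          ≤ (1 / (k : ℝ)) * ∑ i, (Real.exp a + (Real.exp (a + r) - Real.exp a) * (x i - a) / r) := by
            exact mul_le_mul_of_nonneg_left h1 (by positivity)
        _ = _ := by rw [h2, h3]
    -- now the chord value bound
    set s := m - a with hsdef
    have hs0 : 0 ≤ s := by linarith
    have hsr : s ≤ r := by linarith
    have hkey := chord_le hr0 hs0 hsr
    have hexpma : Real.exp m = Real.exp a * Real.exp s := by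
      rw [← Real.exp_add]; congr 1; ring
    have hexpar : Real.exp (a + r) = Real.exp a * Real.exp r := Real.exp_add a r
    have hfinal : Real.exp a + (Real.exp (a + r) - Real.exp a) * (m - a) / r ≤
        (2 + Real.exp r - 2 * Real.exp (r / 2)) * Real.exp m := by
      rw [hexpar, hexpma, ← hsdef]
      have ha0 : (0 : ℝ) < Real.exp a := Real.exp_pos a
      calc Real.exp a + (Real.exp a * Real.exp r - Real.exp a) * s / r
          = Real.exp a * (1 + (Real.exp r - 1) * s / r) := by field_simp
        _ ≤ Real.exp a * ((2 + Real.exp r - 2 * Real.exp (r / 2)) * Real.exp s) :=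
            mul_le_mul_of_nonneg_left hkey ha0.le
        _ = (2 + Real.exp r - 2 * Real.exp (r / 2)) * (Real.exp a * Real.exp s) := by ring
    nlinarith [Real.exp_pos m]
end

section
/- Fix a scale s ∈ {1,2,4,…,n} and block indices x, y ∈ {1,…,n/s}. Suppose there exist a ∈ ℝ and r ≥ 0 such that P_{i,j} ∈ [a, a + r] for all (i, j) in the support of B^s_{x,y}. Then ∑_{(i,j) ∈ supp(B^s_{x,y})} (μ_{s,x,y} − exp(P_{i,j}))² ≤ C_{2r} · s² · μ_{s,x,y}², where C_{2r} = 1 + exp(2r) − 2 exp(r). -/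
open scoped BigOperators

lemma div_eq_iff_aux {s m x : ℕ} (hs : 0 < s) :
    m / s = x ↔ s * x ≤ m ∧ m < s * x + s := by
  have h1 := Nat.div_add_mod m s
  have h2 := Nat.mod_lt m hs
  constructor
  · rintro rfl; omega
  · rintro ⟨ha2, hb⟩
    have hxs : x * s = s * x := Nat.mul_comm x s
    have hle : x ≤ m / s := (Nat.le_div_iff_mul_le hs).2 (by omega)
    have h3 : (x + 1) * s = s * x + s := by ring
    have hlt : m / s < x + 1 := (Nat.div_lt_iff_lt_mul hs).2 (by omega)
    omega

lemma card_filter_div (n s x : ℕ) (hs : 0 < s) (hsn : s ∣ n) (hx : x < n / s) :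
    (Finset.univ.filter (fun i : Fin n => i.val / s = x)).card = s := by
  have hub : s * x + s ≤ n := by
    have h1 : s * (x + 1) ≤ s * (n / s) := Nat.mul_le_mul_left s hx
    have h2 : s * (n / s) = n := Nat.mul_div_cancel' hsn
    nlinarith [h1, h2]
  have hmem : ∀ m ∈ Finset.Ico (s * x) (s * x + s), m < n := by
    intro m hm; rw [Finset.mem_Ico] at hm; omega
  have : Finset.univ.filter (fun i : Fin n => i.val / s = x) =
      (Finset.Ico (s * x) (s * x + s)).attachFin hmem := by
    ext i
    simp [Finset.mem_attachFin, Finset.mem_Ico, div_eq_iff_aux hs]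
  rw [this, Finset.card_attachFin, Nat.card_Ico]
  omega

/-- If the entries of `P` over the block `supp(B^s_{x,y})` lie in an interval `[a, a + r]`,
then `∑_{(i,j) ∈ supp(B^s_{x,y})} (μ_{s,x,y} − exp(P_{i,j}))² ≤ C_{2r} s² μ_{s,x,y}²`
where `C_{2r} = 1 + exp(2r) − 2 exp(r)`. -/
theorem block_squared_error_bound
    (n d : ℕ) (hn : ∃ k : ℕ, n = 2 ^ k)
    (Q K : Matrix (Fin n) (Fin d) ℝ)
    (P : Matrix (Fin n) (Fin n) ℝ) (hP : P = Q * K.transpose)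
    (s : ℕ) (hs : ∃ k : ℕ, s = 2 ^ k) (hsn : s ∣ n)
    (x y : ℕ) (hx : x < n / s) (hy : y < n / s)
    (r : ℝ) (hr : 0 ≤ r)
    (ha : ∃ a : ℝ, ∀ i j : Fin n, i.val / s = x → j.val / s = y →
      P i j ∈ Set.Icc a (a + r))
    (μ : ℝ) (hμ : μ = Real.exp ((1 / (s : ℝ) ^ 2) * frobInner (blockMat n s x y) P)) :
    ∑ ij ∈ Finset.univ.filter
        (fun ij : Fin n × Fin n => ij.1.val / s = x ∧ ij.2.val / s = y),
      (μ - Real.exp (P ij.1 ij.2)) ^ 2 ≤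
      (1 + Real.exp (2 * r) - 2 * Real.exp r) * (s : ℝ) ^ 2 * μ ^ 2 := by
  obtain ⟨a, ha⟩ := ha
  obtain ⟨k, hk⟩ := hs
  have hs0 : 0 < s := hk ▸ (Nat.pow_pos (by norm_num) : 0 < 2 ^ k)
  have hsR : (0 : ℝ) < (s : ℝ) := by exact_mod_cast hs0
  set S := Finset.univ.filter (fun i : Fin n => i.val / s = x) with hS
  set T := Finset.univ.filter (fun j : Fin n => j.val / s = y) with hT
  have hScard : S.card = s := card_filter_div n s x hs0 hsn hx
  have hTcard : T.card = s := card_filter_div n s y hs0 hsn hy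
  set F := Finset.univ.filter
      (fun ij : Fin n × Fin n => ij.1.val / s = x ∧ ij.2.val / s = y) with hF
  have hprod : F = S ×ˢ T := by
    ext ⟨i, j⟩
    simp [hF, hS, hT, Finset.mem_product]
  have hFcard : F.card = s * s := by
    rw [hprod, Finset.card_product, hScard, hTcard]
  -- compute the frobenius inner product as the sum over the block
  have hfrob : frobInner (blockMat n s x y) P = ∑ ij ∈ F, P ij.1 ij.2 := by
    rw [hprod, Finset.sum_product]
    unfold frobInner blockMat
    simp only [Matrix.of_apply, ite_mul, one_mul, zero_mul, hS, hT,
      Finset.sum_filter, ite_and]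
    refine Finset.sum_congr rfl fun i _ => ?_
    by_cases h : i.val / s = x <;> simp [h]
  -- bounds on the sum
  have hmemF : ∀ ij ∈ F, a ≤ P ij.1 ij.2 ∧ P ij.1 ij.2 ≤ a + r := by
    intro ij hij
    rw [hF, Finset.mem_filter] at hij
    exact (ha ij.1 ij.2 hij.2.1 hij.2.2 : _)
  have hlb : (s : ℝ) * s * a ≤ ∑ ij ∈ F, P ij.1 ij.2 := by
    have := Finset.card_nsmul_le_sum F (fun ij => P ij.1 ij.2) a
      (fun ij hij => (hmemF ij hij).1)
    rw [hFcard] at this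
    simpa [nsmul_eq_mul, mul_assoc] using this
  have hub : ∑ ij ∈ F, P ij.1 ij.2 ≤ (s : ℝ) * s * (a + r) := by
    have := Finset.sum_le_card_nsmul F (fun ij => P ij.1 ij.2) (a + r)
      (fun ij hij => (hmemF ij hij).2)
    rw [hFcard] at this
    simpa [nsmul_eq_mul, mul_assoc, mul_add] using this
  set m := (1 / (s : ℝ) ^ 2) * frobInner (blockMat n s x y) P with hm
  have hma : a ≤ m := by
    rw [hm, hfrob]
    rw [div_mul_eq_mul_div, one_mul, le_div_iff₀ (by positivity)]
    nlinarith [hlb]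
  have hmar : m ≤ a + r := by
    rw [hm, hfrob]
    rw [div_mul_eq_mul_div, one_mul, div_le_iff₀ (by positivity)]
    nlinarith [hub]
  have hμ1 : Real.exp a ≤ μ := by rw [hμ]; exact Real.exp_le_exp.2 hma
  have hμ2 : μ ≤ Real.exp (a + r) := by rw [hμ]; exact Real.exp_le_exp.2 hmar
  set D := Real.exp (a + r) - Real.exp a with hD
  have hD0 : 0 ≤ D := by
    have := Real.exp_le_exp.2 (by linarith : a ≤ a + r)
    linarith
  have hbound : ∀ ij ∈ F, (μ - Real.exp (P ij.1 ij.2)) ^ 2 ≤ D ^ 2 := by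
    intro ij hij
    obtain ⟨h1, h2⟩ := hmemF ij hij
    have e1 := Real.exp_le_exp.2 h1
    have e2 := Real.exp_le_exp.2 h2
    exact sq_le_sq' (by linarith) (by linarith)
  have hsum : ∑ ij ∈ F, (μ - Real.exp (P ij.1 ij.2)) ^ 2 ≤ (s : ℝ) * s * D ^ 2 := by
    have := Finset.sum_le_card_nsmul F (fun ij => (μ - Real.exp (P ij.1 ij.2)) ^ 2)
      (D ^ 2) hbound
    rw [hFcard] at this
    simpa [nsmul_eq_mul, mul_assoc] using this
  refine hsum.trans ?_
  have hDeq : D = Real.exp a * (Real.exp r - 1) := by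
    rw [hD, Real.exp_add]; ring
  have h2r : Real.exp (2 * r) = Real.exp r * Real.exp r := by
    rw [two_mul, Real.exp_add]
  have hea : 0 < Real.exp a := Real.exp_pos a
  have her : 1 ≤ Real.exp r := Real.one_le_exp hr
  have hμpos : 0 < μ := lt_of_lt_of_le hea hμ1
  have hsq : Real.exp a ^ 2 ≤ μ ^ 2 := by nlinarith
  rw [hDeq, h2r]
  have : (s : ℝ) * s = (s : ℝ) ^ 2 := by ring
  nlinarith [sq_nonneg (Real.exp r - 1), mul_pos hsR hsR, sq_nonneg ((s:ℝ) * (Real.exp r - 1))]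
end

section
/- Let b ∈ {1,2,4,…,n} and partition {1,…,n}² into the (n/b)² scale-b blocks (the supports of the B^b_{x,y}). Assume r > 0 is such that for every block (x, y) there exists a (block-dependent) a ∈ ℝ with P_{i,j} ∈ [a, a + r] for all (i, j) in the support of B^b_{x,y}. Let S be a set of m₁ blocks containing m₁ largest values among {μ_{b,x,y}}, and let δ be the m₁-th largest value of μ_{b,x,y}. Define Â ∈ ℝ^{n×n} by Â_{i,j} = exp(P_{i,j}) if (i, j) lies in a block of S, and Â_{i,j} = μ_{b,x,y} if (i, j) lies in the block (x, y) ∉ S. Then ‖Â − A‖_F / ‖A‖_F ≤ sqrt( (n² − m₁ b²) · C_{2r} · δ² / ∑_{i,j=1}^n exp(2 P_{i,j}) ), where C_{2r} = 1 + exp(2r) − 2 exp(r). -/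
open scoped BigOperators

set_option maxHeartbeats 1000000

lemma fiber_eq (n b x : ℕ) (hb : 0 < b) (hx : (x + 1) * b ≤ n) :
    Finset.univ.filter (fun i : Fin n => i.val / b = x) =
      (Finset.Ico (x * b) ((x + 1) * b)).attachFin
        (fun m hm => lt_of_lt_of_le (Finset.mem_Ico.mp hm).2 hx) := by
  ext i
  simp only [Finset.mem_filter, Finset.mem_univ, true_and, Finset.mem_attachFin,
    Finset.mem_Ico]
  constructor
  · rintro rfl
    refine ⟨Nat.div_mul_le_self _ _, ?_⟩
    rw [← Nat.div_lt_iff_lt_mul hb]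
    omega
  · rintro ⟨h1, h2⟩
    have h1' : x ≤ i.val / b := (Nat.le_div_iff_mul_le hb).mpr h1
    have h2' : i.val / b < x + 1 := (Nat.div_lt_iff_lt_mul hb).mpr h2
    omega

lemma fiber_card (n b x : ℕ) (hb : 0 < b) (hx : (x + 1) * b ≤ n) :
    (Finset.univ.filter (fun i : Fin n => i.val / b = x)).card = b := by
  rw [fiber_eq n b x hb hx, Finset.card_attachFin, Nat.card_Ico, Nat.succ_mul]
  omega

/-- Proposition 4.2: for the two-scale approximation `Â` (exact on the `m₁` blocks of `S`
with the largest `μ_{b,x,y}`, block-average `μ_{b,x,y}` elsewhere), with `δ` the `m₁`-th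
largest block value (the minimum of `μ` over `S`) and entries of `P` on each block lying
in an interval of length `r`,
`‖Â − A‖_F / ‖A‖_F ≤ sqrt((n² − m₁ b²) C_{2r} δ² / ∑_{i,j} exp(2 P_{i,j}))`,
where `C_{2r} = 1 + exp(2r) − 2 exp(r)`. -/
theorem approx_relative_error_bound
    (n d : ℕ) (hn : ∃ k : ℕ, n = 2 ^ k)
    (Q K : Matrix (Fin n) (Fin d) ℝ)
    (P : Matrix (Fin n) (Fin n) ℝ) (hP : P = Q * K.transpose)
    (A : Matrix (Fin n) (Fin n) ℝ) (hA : A = Matrix.of fun i j => Real.exp (P i j))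
    (b : ℕ) (hb : ∃ k : ℕ, b = 2 ^ k) (hbn : b ∣ n)
    (r : ℝ) (hr : 0 < r)
    (hrange : ∀ x y : ℕ, x < n / b → y < n / b →
      ∃ a : ℝ, ∀ i j : Fin n, i.val / b = x → j.val / b = y →
        P i j ∈ Set.Icc a (a + r))
    (μ : ℕ × ℕ → ℝ)
    (hμ : ∀ pb : ℕ × ℕ,
      μ pb = Real.exp ((1 / (b : ℝ) ^ 2) * frobInner (blockMat n b pb.1 pb.2) P))
    (m₁ : ℕ) (S : Finset (ℕ × ℕ))
    (hS : S ⊆ Finset.range (n / b) ×ˢ Finset.range (n / b))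
    (hcard : S.card = m₁)
    (hmax : ∀ pb ∈ Finset.range (n / b) ×ˢ Finset.range (n / b),
      pb ∉ S → ∀ pb' ∈ S, μ pb ≤ μ pb')
    (δ : ℝ) (hδle : ∀ pb ∈ S, δ ≤ μ pb) (hδmem : ∃ pb ∈ S, μ pb = δ)
    (Ahat : Matrix (Fin n) (Fin n) ℝ)
    (hAhat : Ahat = Matrix.of fun i j =>
      if (i.val / b, j.val / b) ∈ S then Real.exp (P i j)
      else μ (i.val / b, j.val / b)) :
    Real.sqrt (∑ i, ∑ j, (Ahat i j - A i j) ^ 2) /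
        Real.sqrt (∑ i, ∑ j, (A i j) ^ 2) ≤
      Real.sqrt (((n : ℝ) ^ 2 - (m₁ : ℝ) * (b : ℝ) ^ 2) *
        (1 + Real.exp (2 * r) - 2 * Real.exp r) * δ ^ 2 /
        (∑ i, ∑ j, Real.exp (2 * P i j))) := by
  obtain ⟨k, hnk⟩ := hn
  obtain ⟨k', hbk⟩ := hb
  have hn0 : 0 < n := by rw [hnk]; positivity
  have hb0 : 0 < b := by rw [hbk]; positivity
  set C : ℝ := 1 + Real.exp (2 * r) - 2 * Real.exp r with hCdef
  have hexp2r : Real.exp (2 * r) = (Real.exp r) ^ 2 := by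
    rw [two_mul, Real.exp_add, sq]
  have hC : C = (Real.exp r - 1) ^ 2 := by rw [hCdef, hexp2r]; ring
  have hC0 : 0 ≤ C := hC ▸ sq_nonneg _
  have hδ0 : 0 < δ := by
    obtain ⟨pb, hpb, hpbδ⟩ := hδmem
    rw [← hpbδ, hμ]; exact Real.exp_pos _
  -- the shared denominator
  have hAsq : ∀ i j : Fin n, (A i j) ^ 2 = Real.exp (2 * P i j) := by
    intro i j
    rw [hA]
    simp only [Matrix.of_apply]
    rw [two_mul, Real.exp_add, sq]
  have hDeq : (∑ i, ∑ j, (A i j) ^ 2) = ∑ i, ∑ j, Real.exp (2 * P i j) := by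
    exact Finset.sum_congr rfl fun i _ => Finset.sum_congr rfl fun j _ => hAsq i j
  have hDpos : 0 < ∑ i, ∑ j, Real.exp (2 * P i j) := by
    have hne : (Finset.univ : Finset (Fin n)).Nonempty := ⟨⟨0, hn0⟩, Finset.mem_univ _⟩
    exact Finset.sum_pos (fun i _ => Finset.sum_pos (fun j _ => Real.exp_pos _) hne) hne
  -- fiber facts
  have hfibcard : ∀ x : ℕ, x < n / b →
      (Finset.univ.filter (fun i : Fin n => i.val / b = x)).card = b := by
    intro x hx
    refine fiber_card n b x hb0 ?_
    calc (x + 1) * b ≤ (n / b) * b := Nat.mul_le_mul_right b hx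
      _ = n := Nat.div_mul_cancel hbn
  -- per-entry bound
  have key : ∀ i j : Fin n, (Ahat i j - A i j) ^ 2 ≤
      if (i.val / b, j.val / b) ∈ S then 0 else C * δ ^ 2 := by
    intro i j
    by_cases hmem : (i.val / b, j.val / b) ∈ S
    · simp [hmem, hAhat, hA]
    · simp only [hmem, if_false]
      set x := i.val / b
      set y := j.val / b
      have hx : x < n / b := Nat.div_lt_div_of_lt_of_dvd hbn i.isLt
      have hy : y < n / b := Nat.div_lt_div_of_lt_of_dvd hbn j.isLt
      obtain ⟨a, ha⟩ := hrange x y hx hy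
      -- block sum bounds
      set fx := Finset.univ.filter (fun i : Fin n => i.val / b = x) with hfx
      set fy := Finset.univ.filter (fun j : Fin n => j.val / b = y) with hfy
      have hcx : fx.card = b := hfibcard x hx
      have hcy : fy.card = b := hfibcard y hy
      have hsum : frobInner (blockMat n b x y) P = ∑ i' ∈ fx, ∑ j' ∈ fy, P i' j' := by
        unfold frobInner blockMat
        simp only [Matrix.of_apply, ite_mul, one_mul, zero_mul]
        rw [Finset.sum_filter]
        refine Finset.sum_congr rfl fun i' _ => ?_
        rw [Finset.sum_filter]
        by_cases hi' : i'.val / b = x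
        · simp [hi']
        · simp [hi']
      have hlow : (b : ℝ) ^ 2 * a ≤ frobInner (blockMat n b x y) P := by
        rw [hsum]
        calc (b : ℝ) ^ 2 * a = ∑ _i' ∈ fx, ∑ _j' ∈ fy, a := by
              rw [Finset.sum_const, Finset.sum_const, hcx, hcy]
              push_cast [smul_eq_mul]; ring
          _ ≤ _ := Finset.sum_le_sum fun i' hi' => Finset.sum_le_sum fun j' hj' => by
              have hi'' := (Finset.mem_filter.mp hi').2
              have hj'' := (Finset.mem_filter.mp hj').2
              exact (ha i' j' hi'' hj'').1
      have hhigh : frobInner (blockMat n b x y) P ≤ (b : ℝ) ^ 2 * (a + r) := by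
        rw [hsum]
        calc (∑ i' ∈ fx, ∑ j' ∈ fy, P i' j') ≤ ∑ _i' ∈ fx, ∑ _j' ∈ fy, (a + r) :=
              Finset.sum_le_sum fun i' hi' => Finset.sum_le_sum fun j' hj' => by
                have hi'' := (Finset.mem_filter.mp hi').2
                have hj'' := (Finset.mem_filter.mp hj').2
                exact (ha i' j' hi'' hj'').2
          _ = (b : ℝ) ^ 2 * (a + r) := by
              rw [Finset.sum_const, Finset.sum_const, hcx, hcy]
              push_cast [smul_eq_mul]; ring
      have hb2 : (0 : ℝ) < (b : ℝ) ^ 2 := by positivity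
      have hmlow : a ≤ (1 / (b : ℝ) ^ 2) * frobInner (blockMat n b x y) P := by
        have h : (1 / (b : ℝ) ^ 2) * ((b : ℝ) ^ 2 * a) ≤
            (1 / (b : ℝ) ^ 2) * frobInner (blockMat n b x y) P :=
          mul_le_mul_of_nonneg_left hlow (by positivity)
        rw [one_div] at h ⊢
        rwa [inv_mul_cancel_left₀ (ne_of_gt hb2)] at h
      have hmhigh : (1 / (b : ℝ) ^ 2) * frobInner (blockMat n b x y) P ≤ a + r := by
        have h : (1 / (b : ℝ) ^ 2) * frobInner (blockMat n b x y) P ≤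
            (1 / (b : ℝ) ^ 2) * ((b : ℝ) ^ 2 * (a + r)) :=
          mul_le_mul_of_nonneg_left hhigh (by positivity)
        rw [one_div] at h ⊢
        rwa [inv_mul_cancel_left₀ (ne_of_gt hb2)] at h
      set u := μ (x, y) with hu
      have hμx : u = Real.exp ((1 / (b : ℝ) ^ 2) * frobInner (blockMat n b x y) P) :=
        hμ (x, y)
      have hu1 : Real.exp a ≤ u := by rw [hμx]; exact Real.exp_le_exp.mpr hmlow
      have hu2 : u ≤ Real.exp a * Real.exp r := by
        rw [hμx, ← Real.exp_add]; exact Real.exp_le_exp.mpr hmhigh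
      have hPij := ha i j rfl rfl
      have hv1 : Real.exp a ≤ Real.exp (P i j) := Real.exp_le_exp.mpr hPij.1
      have hv2 : Real.exp (P i j) ≤ Real.exp a * Real.exp r := by
        rw [← Real.exp_add]; exact Real.exp_le_exp.mpr hPij.2
      have huδ : u ≤ δ := by
        obtain ⟨pb', hpb', hpbδ'⟩ := hδmem
        have := hmax (x, y) (by
          simp only [Finset.mem_product, Finset.mem_range]; exact ⟨hx, hy⟩) hmem pb' hpb'
        rw [hpbδ'] at this
        exact this
      have hAhx : Ahat i j = u := by rw [hAhat]; simp only [Matrix.of_apply]; exact if_neg hmem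
      have hAx : A i j = Real.exp (P i j) := by rw [hA]; rfl
      rw [hAhx, hAx]
      have her1 : (1 : ℝ) ≤ Real.exp r := Real.one_le_exp hr.le
      have hea : (0 : ℝ) < Real.exp a := Real.exp_pos a
      have habs1 : u - Real.exp (P i j) ≤ Real.exp a * (Real.exp r - 1) := by
        have := hu2; have := hv1; linarith [mul_sub (Real.exp a) (Real.exp r) 1,
          mul_one (Real.exp a)]
      have habs2 : -(Real.exp a * (Real.exp r - 1)) ≤ u - Real.exp (P i j) := by
        have := hv2; have := hu1; linarith [mul_sub (Real.exp a) (Real.exp r) 1,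
          mul_one (Real.exp a)]
      have h1 : (u - Real.exp (P i j)) ^ 2 ≤ (Real.exp a * (Real.exp r - 1)) ^ 2 :=
        sq_le_sq' habs2 habs1
      have h2 : (Real.exp a * (Real.exp r - 1)) ^ 2 ≤ (δ * (Real.exp r - 1)) ^ 2 := by
        have hle : Real.exp a * (Real.exp r - 1) ≤ δ * (Real.exp r - 1) :=
          mul_le_mul_of_nonneg_right (by linarith) (by linarith)
        have hnn : 0 ≤ Real.exp a * (Real.exp r - 1) :=
          mul_nonneg hea.le (by linarith)
        exact pow_le_pow_left₀ hnn hle 2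
      have h3 : (δ * (Real.exp r - 1)) ^ 2 = C * δ ^ 2 := by rw [hC]; ring
      calc (u - Real.exp (P i j)) ^ 2 ≤ (Real.exp a * (Real.exp r - 1)) ^ 2 := h1
        _ ≤ (δ * (Real.exp r - 1)) ^ 2 := h2
        _ = C * δ ^ 2 := h3
  -- counting
  have hcount : (Finset.univ.filter
      (fun p : Fin n × Fin n => (p.1.val / b, p.2.val / b) ∈ S)).card = m₁ * (b * b) := by
    set T := Finset.univ.filter
      (fun p : Fin n × Fin n => (p.1.val / b, p.2.val / b) ∈ S) with hT
    have hfib : T.card = ∑ pb ∈ S,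
        (T.filter (fun p : Fin n × Fin n => (p.1.val / b, p.2.val / b) = pb)).card :=
      Finset.card_eq_sum_card_fiberwise (fun p hp => (Finset.mem_filter.mp hp).2)
    rw [hfib]
    rw [Finset.sum_congr rfl (fun pb hpb => ?_), Finset.sum_const, hcard, smul_eq_mul]
    have hmem' := hS hpb
    simp only [Finset.mem_product, Finset.mem_range] at hmem'
    have heq : T.filter (fun p : Fin n × Fin n => (p.1.val / b, p.2.val / b) = pb) =
        Finset.univ.filter (fun p : Fin n × Fin n => (p.1.val / b, p.2.val / b) = pb) := by
      ext p
      simp only [hT, Finset.mem_filter, Finset.mem_univ, true_and]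
      constructor
      · rintro ⟨_, h2⟩; exact h2
      · rintro h2; exact ⟨h2 ▸ hpb, h2⟩
    rw [heq]
    have heq2 : Finset.univ.filter (fun p : Fin n × Fin n => (p.1.val / b, p.2.val / b) = pb)
        = (Finset.univ.filter (fun i : Fin n => i.val / b = pb.1)) ×ˢ
          (Finset.univ.filter (fun j : Fin n => j.val / b = pb.2)) := by
      rw [← Finset.filter_product, ← Finset.univ_product_univ]
      congr 1
      ext p
      rw [Prod.mk.injEq]
    rw [heq2, Finset.card_product, hfibcard pb.1 hmem'.1, hfibcard pb.2 hmem'.2]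
  have hle_nn : m₁ * (b * b) ≤ n * n := by
    calc m₁ * (b * b) = (Finset.univ.filter
          (fun p : Fin n × Fin n => (p.1.val / b, p.2.val / b) ∈ S)).card := hcount.symm
      _ ≤ (Finset.univ : Finset (Fin n × Fin n)).card := Finset.card_le_card (Finset.filter_subset _ _)
      _ = n * n := by simp
  -- sum of bounds
  have hEbound : (∑ i, ∑ j, (Ahat i j - A i j) ^ 2) ≤
      ((n : ℝ) ^ 2 - (m₁ : ℝ) * (b : ℝ) ^ 2) * C * δ ^ 2 := by
    calc (∑ i, ∑ j, (Ahat i j - A i j) ^ 2)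
        ≤ ∑ i, ∑ j, (if ((i : Fin n).val / b, (j : Fin n).val / b) ∈ S then (0:ℝ) else C * δ ^ 2) :=
          Finset.sum_le_sum fun i _ => Finset.sum_le_sum fun j _ => key i j
      _ = ∑ p : Fin n × Fin n, (if (p.1.val / b, p.2.val / b) ∈ S then (0:ℝ) else C * δ ^ 2) := by
          rw [← Finset.univ_product_univ, Finset.sum_product]
      _ = ((Finset.univ.filter
            (fun p : Fin n × Fin n => ¬ (p.1.val / b, p.2.val / b) ∈ S)).card : ℝ) * (C * δ ^ 2) := by
          rw [Finset.sum_ite, Finset.sum_const_zero, Finset.sum_const, zero_add, nsmul_eq_mul]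
      _ = ((n : ℝ) ^ 2 - (m₁ : ℝ) * (b : ℝ) ^ 2) * (C * δ ^ 2) := by
          congr 1
          have hsplit := Finset.card_filter_add_card_filter_not
            (s := (Finset.univ : Finset (Fin n × Fin n)))
            (fun p : Fin n × Fin n => (p.1.val / b, p.2.val / b) ∈ S)
          have huniv : (Finset.univ : Finset (Fin n × Fin n)).card = n * n := by simp
          have : (Finset.univ.filter
              (fun p : Fin n × Fin n => ¬ (p.1.val / b, p.2.val / b) ∈ S)).card
              = n * n - m₁ * (b * b) := by omega
          rw [this, Nat.cast_sub hle_nn]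
          push_cast
          ring
      _ = ((n : ℝ) ^ 2 - (m₁ : ℝ) * (b : ℝ) ^ 2) * C * δ ^ 2 := by ring
  -- assemble
  have hTnn : 0 ≤ ((n : ℝ) ^ 2 - (m₁ : ℝ) * (b : ℝ) ^ 2) * C * δ ^ 2 := by
    have : (0:ℝ) ≤ (n : ℝ) ^ 2 - (m₁ : ℝ) * (b : ℝ) ^ 2 := by
      have := hle_nn
      have h' : ((m₁ * (b * b) : ℕ) : ℝ) ≤ ((n * n : ℕ) : ℝ) := Nat.cast_le.mpr this
      push_cast at h'
      nlinarith
    positivity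
  rw [hDeq, Real.sqrt_div hTnn]
  rw [div_le_div_iff_of_pos_right (Real.sqrt_pos.mpr hDpos)]
  exact Real.sqrt_le_sqrt hEbound
end

section
/- Let I be the full collection of block components B^s_{x,y} over all scales s ∈ {1,2,4,…,n} and all translations x, y ∈ {1,…,n/s}, and let J ⊆ I. Define matrices E_s ∈ ℝ^{n×n} and coefficients α^s_{x,y} recursively: E_n = A, and for each scale s = n, n/2, …, 1, set α^s_{x,y} = (1/s²)⟨B^s_{x,y}, E_s⟩ for each B^s_{x,y} ∈ J at scale s, and E_{s/2} = E_s − ∑_{B^s_{x,y} ∈ J at scale s} α^s_{x,y} B^s_{x,y}. Let Â* = ∑_{B^s_{x,y} ∈ J} α^s_{x,y} B^s_{x,y}. Then for every entry (i, j): if at least one element of J is supported on (i, j), and (s, x, y) indexes the element of J supported on (i, j) with the smallest scale s (which is unique, since blocks at a fixed scale have disjoint supports), then (Â*)_{i,j} = μ*_{s,x,y} = (1/s²)⟨B^s_{x,y}, A⟩; if no element of J is supported on (i, j), then (Â*)_{i,j} = 0. -/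
open scoped BigOperators

theorem frobInner_sub' {n : ℕ} (M A B : Matrix (Fin n) (Fin n) ℝ) :
    frobInner M (A - B) = frobInner M A - frobInner M B := by
  simp [frobInner, Matrix.sub_apply, mul_sub, Finset.sum_sub_distrib]

theorem frobInner_sum' {n : ℕ} {ι : Type*} (M : Matrix (Fin n) (Fin n) ℝ) (s : Finset ι)
    (f : ι → Matrix (Fin n) (Fin n) ℝ) :
    frobInner M (∑ k ∈ s, f k) = ∑ k ∈ s, frobInner M (f k) := by
  unfold frobInner
  simp only [Matrix.sum_apply, Finset.mul_sum]
  rw [show (∑ i, ∑ j, ∑ k ∈ s, M i j * f k i j) = ∑ i, ∑ k ∈ s, ∑ j, M i j * f k i j from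
    Finset.sum_congr rfl fun i _ => Finset.sum_comm]
  exact Finset.sum_comm

theorem frobInner_smul' {n : ℕ} (M A : Matrix (Fin n) (Fin n) ℝ) (c : ℝ) :
    frobInner M (c • A) = c * frobInner M A := by
  simp [frobInner, Matrix.smul_apply, smul_eq_mul, Finset.mul_sum, mul_left_comm]

theorem div_eq_iff' (a s x : ℕ) (hs : 0 < s) : a / s = x ↔ s*x ≤ a ∧ a < s*x+s := by
  constructor
  · rintro rfl
    have h1 := Nat.mul_div_le a s
    have h2 := Nat.lt_mul_div_succ a hs
    rw [Nat.mul_add, Nat.mul_one] at h2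
    omega
  · rintro ⟨h1, h2⟩
    exact Nat.div_eq_of_lt_le (by rw [Nat.mul_comm]; omega)
      (by rw [Nat.add_mul, Nat.one_mul, Nat.mul_comm]; omega)

theorem card_div_eq (n s x : ℕ) (hs : 0 < s) (hle : s * x + s ≤ n) :
    ((Finset.univ : Finset (Fin n)).filter (fun i => i.val / s = x)).card = s := by
  rw [Finset.card_filter]
  rw [Fin.sum_univ_eq_sum_range (fun a => if a / s = x then 1 else 0) n]
  rw [← Finset.card_filter]
  have : (Finset.range n).filter (fun a => a / s = x) = Finset.Ico (s*x) (s*x+s) := by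
    apply Finset.ext
    intro a
    simp only [Finset.mem_filter, Finset.mem_range, Finset.mem_Ico, div_eq_iff' a s x hs]
    omega
  rw [this, Nat.card_Ico]
  omega

theorem div_pow_mono {t t' a b : ℕ} (htt' : t ≤ t') (h : a / 2^t = b / 2^t) :
    a / 2^t' = b / 2^t' := by
  have he : (2:ℕ)^t' = 2^t * 2^(t'-t) := by rw [← pow_add]; congr 1; omega
  rw [he, ← Nat.div_div_eq_div_mul, ← Nat.div_div_eq_div_mul, h]

theorem frob_block_eq (n N t t' : ℕ) (hn : n = 2^N) (htt' : t ≤ t') (ht'N : t' ≤ N)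
    (i j : Fin n) (x' y' : ℕ) :
    frobInner (blockMat n (2^t) (i.val / 2^t) (j.val / 2^t)) (blockMat n (2^t') x' y') =
    if i.val / 2^t' = x' ∧ j.val / 2^t' = y' then ((2:ℝ)^t)^2 else 0 := by
  have htN : t ≤ N := le_trans htt' ht'N
  have hdvd : (2:ℕ)^t ∣ n := hn ▸ pow_dvd_pow 2 htN
  have hcount : ∀ a : Fin n, 2^t * (a.val / 2^t) + 2^t ≤ n := by
    intro a
    have h1 : a.val / 2^t < n / 2^t := Nat.div_lt_div_of_lt_of_dvd hdvd a.isLt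
    have h2 : 2^t * (a.val / 2^t + 1) ≤ 2^t * (n / 2^t) := Nat.mul_le_mul_left _ h1
    rw [Nat.mul_add, Nat.mul_one] at h2
    have h3 : 2^t * (n / 2^t) = n := Nat.mul_div_cancel' hdvd
    omega
  unfold frobInner blockMat
  simp only [Matrix.of_apply]
  by_cases hc : i.val / 2^t' = x' ∧ j.val / 2^t' = y'
  · rw [if_pos hc]
    have hterm : ∀ a b : Fin n,
        (if (a.val/2^t = i.val/2^t ∧ b.val/2^t = j.val/2^t) then (1:ℝ) else 0) *
        (if (a.val/2^t' = x' ∧ b.val/2^t' = y') then (1:ℝ) else 0)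
        = (if a.val/2^t = i.val/2^t then (1:ℝ) else 0) *
          (if b.val/2^t = j.val/2^t then (1:ℝ) else 0) := by
      intro a b
      by_cases h1 : a.val/2^t = i.val/2^t ∧ b.val/2^t = j.val/2^t
      · have hq : a.val/2^t' = x' ∧ b.val/2^t' = y' :=
          ⟨(div_pow_mono htt' h1.1).trans hc.1, (div_pow_mono htt' h1.2).trans hc.2⟩
        rw [if_pos h1, if_pos hq, if_pos h1.1, if_pos h1.2]
      · rw [if_neg h1, zero_mul]
        by_cases ha : a.val/2^t = i.val/2^t
        · rw [if_pos ha, if_neg (fun hb => h1 ⟨ha, hb⟩), mul_zero]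
        · rw [if_neg ha, zero_mul]
    calc (∑ a : Fin n, ∑ b : Fin n,
          (if (a.val/2^t = i.val/2^t ∧ b.val/2^t = j.val/2^t) then (1:ℝ) else 0) *
          (if (a.val/2^t' = x' ∧ b.val/2^t' = y') then (1:ℝ) else 0))
        = ∑ a : Fin n, ∑ b : Fin n,
          (if a.val/2^t = i.val/2^t then (1:ℝ) else 0) *
          (if b.val/2^t = j.val/2^t then (1:ℝ) else 0) :=
          Finset.sum_congr rfl fun a _ => Finset.sum_congr rfl fun b _ => hterm a b
      _ = (∑ a : Fin n, if a.val/2^t = i.val/2^t then (1:ℝ) else 0) *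
          (∑ b : Fin n, if b.val/2^t = j.val/2^t then (1:ℝ) else 0) := by
          rw [Finset.sum_mul_sum]
      _ = ((2:ℝ)^t)^2 := by
          rw [Finset.sum_boole, Finset.sum_boole,
            card_div_eq n (2^t) _ (Nat.pow_pos (by norm_num)) (hcount i),
            card_div_eq n (2^t) _ (Nat.pow_pos (by norm_num)) (hcount j)]
          push_cast
          ring
  · rw [if_neg hc]
    apply Finset.sum_eq_zero; intro a _
    apply Finset.sum_eq_zero; intro b _
    by_cases h1 : a.val/2^t = i.val/2^t ∧ b.val/2^t = j.val/2^t
    · rw [if_pos h1, if_neg, mul_zero]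
      intro hq
      exact hc ⟨(div_pow_mono htt' h1.1).symm.trans hq.1,
        (div_pow_mono htt' h1.2).symm.trans hq.2⟩
    · rw [if_neg h1, zero_mul]

/-- Entries of `Â* = ∑_{B ∈ J} α B` from the top-down residual decomposition:
components are coded as triples `(t, x, y)` representing `B^{2^t}_{x,y}`, `E` is indexed
from the top scale down (`E 0 = E_n = A`, the matrix at scale `s = 2^(N−m)` is `E m`),
`α^s_{x,y} = (1/s²)⟨B^s_{x,y}, E_s⟩` and `E_{s/2} = E_s − ∑_{B^s_{x,y} ∈ J} α^s_{x,y} B^s_{x,y}`.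
Then `(Â*)_{i,j} = μ*_{s,x,y} = (1/s²)⟨B^s_{x,y}, A⟩` where `(s, x, y)` indexes the element
of `J` supported on `(i, j)` with the smallest scale, and `(Â*)_{i,j} = 0` if no element of
`J` is supported on `(i, j)`. -/
theorem Ahat_star_entries
    (n d N : ℕ) (hn : n = 2 ^ N)
    (Q K : Matrix (Fin n) (Fin d) ℝ)
    (P : Matrix (Fin n) (Fin n) ℝ) (hP : P = Q * K.transpose)
    (A : Matrix (Fin n) (Fin n) ℝ) (hA : A = Matrix.of fun i j => Real.exp (P i j))
    (J : Finset (ℕ × ℕ × ℕ))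
    (hJ : ∀ txy ∈ J, txy.1 ≤ N ∧ txy.2.1 < n / 2 ^ txy.1 ∧ txy.2.2 < n / 2 ^ txy.1)
    (E : ℕ → Matrix (Fin n) (Fin n) ℝ) (α : ℕ × ℕ × ℕ → ℝ)
    (hE0 : E 0 = A)
    (hα : ∀ txy ∈ J, α txy = (1 / ((2 : ℝ) ^ txy.1) ^ 2) *
      frobInner (blockMat n (2 ^ txy.1) txy.2.1 txy.2.2) (E (N - txy.1)))
    (hErec : ∀ m : ℕ, m ≤ N →
      E (m + 1) = E m - ∑ txy ∈ J.filter (fun txy => txy.1 = N - m),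
        α txy • blockMat n (2 ^ txy.1) txy.2.1 txy.2.2)
    (Ahat : Matrix (Fin n) (Fin n) ℝ)
    (hAhat : Ahat = ∑ txy ∈ J, α txy • blockMat n (2 ^ txy.1) txy.2.1 txy.2.2) :
    ∀ i j : Fin n,
      ((∀ txy ∈ J,
          ¬ (i.val / 2 ^ txy.1 = txy.2.1 ∧ j.val / 2 ^ txy.1 = txy.2.2)) →
        Ahat i j = 0) ∧
      (∀ txy ∈ J,
        (i.val / 2 ^ txy.1 = txy.2.1 ∧ j.val / 2 ^ txy.1 = txy.2.2) →
        (∀ txy' ∈ J,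
          (i.val / 2 ^ txy'.1 = txy'.2.1 ∧ j.val / 2 ^ txy'.1 = txy'.2.2) →
          txy.1 ≤ txy'.1) →
        Ahat i j = (1 / ((2 : ℝ) ^ txy.1) ^ 2) *
          frobInner (blockMat n (2 ^ txy.1) txy.2.1 txy.2.2) A) := by
  classical
  intro i j
  constructor
  · intro h
    rw [hAhat, Matrix.sum_apply]
    apply Finset.sum_eq_zero
    intro p hp
    simp only [Matrix.smul_apply, blockMat, Matrix.of_apply, smul_eq_mul]
    rw [if_neg (h p hp), mul_zero]
  · rintro ⟨t, x, y⟩ hmem ⟨hcx, hcy⟩ hmin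
    simp only at hcx hcy
    have htN : t ≤ N := (hJ (t,x,y) hmem).1
    set C : Finset (ℕ × ℕ × ℕ) :=
      J.filter (fun p => i.val / 2^p.1 = p.2.1 ∧ j.val / 2^p.1 = p.2.2) with hCdef
    have hAij : Ahat i j = ∑ p ∈ C, α p := by
      rw [hAhat, Matrix.sum_apply, hCdef, Finset.sum_filter]
      apply Finset.sum_congr rfl
      intro p _
      simp only [Matrix.smul_apply, blockMat, Matrix.of_apply, smul_eq_mul]
      by_cases hp : i.val / 2^p.1 = p.2.1 ∧ j.val / 2^p.1 = p.2.2
      · rw [if_pos hp, if_pos hp, mul_one]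
      · rw [if_neg hp, if_neg hp, mul_zero]
    have hB : blockMat n (2^t) x y = blockMat n (2^t) (i.val / 2^t) (j.val / 2^t) := by
      rw [hcx, hcy]
    have key : ∀ m, m ≤ N - t →
        frobInner (blockMat n (2^t) x y) (E m)
          = frobInner (blockMat n (2^t) x y) A
            - ((2:ℝ)^t)^2 * ∑ p ∈ C.filter (fun p => N - m < p.1), α p := by
      intro m
      induction m with
      | zero =>
        intro _
        have hempty : C.filter (fun p => N - 0 < p.1) = ∅ := by
          apply Finset.filter_false_of_mem
          intro p hp
          have := (hJ p (Finset.mem_of_mem_filter p hp)).1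
          omega
        rw [hE0, hempty, Finset.sum_empty, mul_zero, sub_zero]
      | succ m ih =>
        intro hm1
        have hmN : m ≤ N := by omega
        rw [hErec m hmN, frobInner_sub', frobInner_sum', ih (by omega)]
        have hset : (J.filter (fun p => p.1 = N - m)).filter
              (fun p => i.val / 2^p.1 = p.2.1 ∧ j.val / 2^p.1 = p.2.2)
            = C.filter (fun p => p.1 = N - m) := by
          ext p
          simp only [hCdef, Finset.mem_filter]
          tauto
        have hsum : ∑ p ∈ J.filter (fun p => p.1 = N - m),
            frobInner (blockMat n (2^t) x y) (α p • blockMat n (2^p.1) p.2.1 p.2.2)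
            = ((2:ℝ)^t)^2 * ∑ p ∈ C.filter (fun p => p.1 = N - m), α p := by
          calc ∑ p ∈ J.filter (fun p => p.1 = N - m),
              frobInner (blockMat n (2^t) x y) (α p • blockMat n (2^p.1) p.2.1 p.2.2)
              = ∑ p ∈ J.filter (fun p => p.1 = N - m),
                (if i.val / 2^p.1 = p.2.1 ∧ j.val / 2^p.1 = p.2.2
                  then ((2:ℝ)^t)^2 * α p else 0) := by
                apply Finset.sum_congr rfl
                intro p hp
                have hpt : p.1 = N - m := (Finset.mem_filter.mp hp).2
                have htp : t ≤ p.1 := by omega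
                have hpN : p.1 ≤ N := by omega
                rw [frobInner_smul', hB, frob_block_eq n N t p.1 hn htp hpN i j p.2.1 p.2.2]
                by_cases hcov : i.val / 2^p.1 = p.2.1 ∧ j.val / 2^p.1 = p.2.2
                · rw [if_pos hcov, if_pos hcov]; ring
                · rw [if_neg hcov, if_neg hcov, mul_zero]
            _ = ∑ p ∈ (J.filter (fun p => p.1 = N - m)).filter
                  (fun p => i.val / 2^p.1 = p.2.1 ∧ j.val / 2^p.1 = p.2.2),
                ((2:ℝ)^t)^2 * α p := (Finset.sum_filter _ _).symm
            _ = ∑ p ∈ C.filter (fun p => p.1 = N - m), ((2:ℝ)^t)^2 * α p := by rw [hset]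
            _ = ((2:ℝ)^t)^2 * ∑ p ∈ C.filter (fun p => p.1 = N - m), α p := by
                rw [Finset.mul_sum]
        rw [hsum,
          show frobInner (blockMat n (2^t) x y) A
              - ((2:ℝ)^t)^2 * (∑ p ∈ C.filter (fun p => N - m < p.1), α p)
              - ((2:ℝ)^t)^2 * (∑ p ∈ C.filter (fun p => p.1 = N - m), α p)
            = frobInner (blockMat n (2^t) x y) A
              - ((2:ℝ)^t)^2 * ((∑ p ∈ C.filter (fun p => N - m < p.1), α p)
                + ∑ p ∈ C.filter (fun p => p.1 = N - m), α p) from by ring]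
        congr 2
        have e1 : (C.filter (fun p => N - (m+1) < p.1)).filter (fun p => N - m < p.1)
            = C.filter (fun p => N - m < p.1) := by
          ext p
          simp only [Finset.mem_filter]
          constructor
          · rintro ⟨⟨h1, _⟩, h3⟩; exact ⟨h1, h3⟩
          · rintro ⟨h1, h3⟩; exact ⟨⟨h1, by omega⟩, h3⟩
        have e2 : (C.filter (fun p => N - (m+1) < p.1)).filter (fun p => ¬ N - m < p.1)
            = C.filter (fun p => p.1 = N - m) := by
          ext p
          simp only [Finset.mem_filter, not_lt]
          constructor
          · rintro ⟨⟨h1, h2⟩, h3⟩; exact ⟨h1, by omega⟩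
          · rintro ⟨h1, h2⟩; exact ⟨⟨h1, by omega⟩, by omega⟩
        rw [← Finset.sum_filter_add_sum_filter_not
          (C.filter (fun p => N - (m+1) < p.1)) (fun p => N - m < p.1) α, e1, e2]
    have hkeyNt := key (N - t) le_rfl
    rw [show N - (N - t) = t from by omega] at hkeyNt
    have hmemC : (t,x,y) ∈ C := by
      rw [hCdef, Finset.mem_filter]
      exact ⟨hmem, hcx, hcy⟩
    have hCt : C.filter (fun p => p.1 = t) = {(t,x,y)} := by
      apply Finset.ext
      rintro ⟨pt, px, py⟩
      simp only [Finset.mem_filter, Finset.mem_singleton, hCdef, Prod.mk.injEq]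
      constructor
      · rintro ⟨⟨hpJ, hpc1, hpc2⟩, hpt⟩
        subst hpt
        exact ⟨rfl, hpc1.symm.trans hcx, hpc2.symm.trans hcy⟩
      · rintro ⟨h1, h2, h3⟩
        subst h1; subst h2; subst h3
        exact ⟨⟨hmem, hcx, hcy⟩, rfl⟩
    have e3 : C.filter (fun p => ¬ p.1 = t) = C.filter (fun p => t < p.1) := by
      ext p
      simp only [hCdef, Finset.mem_filter]
      constructor
      · rintro ⟨⟨hpJ, hcov⟩, h2⟩
        have hge := hmin p hpJ hcov
        exact ⟨⟨hpJ, hcov⟩, by omega⟩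
      · rintro ⟨h1, h2⟩
        exact ⟨h1, by omega⟩
    have hsplitC : ∑ p ∈ C, α p = α (t,x,y) + ∑ p ∈ C.filter (fun p => t < p.1), α p := by
      rw [← Finset.sum_filter_add_sum_filter_not C (fun p => p.1 = t) α, hCt,
        Finset.sum_singleton, e3]
    have hαt := hα (t,x,y) hmem
    simp only at hαt
    rw [hkeyNt] at hαt
    have hs2 : ((2:ℝ)^t)^2 ≠ 0 := by positivity
    simp only
    rw [hAij, hsplitC, hαt]
    field_simp
    ring
end
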